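/- arXiv:1007.1292 — 8 statements merged into one kernel-verified Lean document; each statement's English description precedes it below -/
import Mathlib

section
/- Let M be a finite graph with vertex set V and edge set E, let α : V → ℕ and β : E → ℕ. Then M admits an assignment of a nonnegative integer weight to each half-edge such that each edge e has total weight β(e) and each vertex v has total ingoing weight α(v) (an α/β-orientation) if and only if (i) ∑_{v∈V} α(v) = ∑_{e∈E} β(e), and (ii) for every subset S of vertices, ∑_{v∈S} α(v) ≥ ∑_{e∈E_S} β(e), where E_S is the set of edges with both endpoints in S. -/
open Finset

/-- The set of edges with both endpoints in `S`. -/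
def ES {V E : Type} [Fintype E] [DecidableEq V] (ends : E → V × V) (S : Finset V) :
    Finset E :=
  univ.filter fun e' => (ends e').1 ∈ S ∧ (ends e').2 ∈ S

lemma mem_ES {V E : Type} [Fintype E] [DecidableEq V] (ends : E → V × V) (S : Finset V)
    (e : E) : e ∈ ES ends S ↔ (ends e).1 ∈ S ∧ (ends e).2 ∈ S := by
  simp [ES]

/-- Dichotomy: one of the endpoints of an edge of positive weight is "good", i.e. every
tight set containing it contains the other endpoint. -/
lemma good_exists {V E : Type} [Fintype V] [Fintype E] [DecidableEq V] [DecidableEq E]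
    (ends : E → V × V) (α : V → ℕ) (β : E → ℕ) (e : E) (hβe : 1 ≤ β e)
    (hii : ∀ S : Finset V, ∑ e' ∈ ES ends S, β e' ≤ ∑ v ∈ S, α v) :
    (∀ S : Finset V, (ends e).1 ∈ S → (ends e).2 ∉ S →
        ∑ e' ∈ ES ends S, β e' + 1 ≤ ∑ v ∈ S, α v) ∨
    (∀ S : Finset V, (ends e).2 ∈ S → (ends e).1 ∉ S →
        ∑ e' ∈ ES ends S, β e' + 1 ≤ ∑ v ∈ S, α v) := by
  by_contra h
  push_neg at h
  obtain ⟨⟨S, haS, hbS, hS⟩, ⟨T, hbT, haT, hT⟩⟩ := h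
  have key1 : ES ends S ∩ ES ends T = ES ends (S ∩ T) := by
    ext e'; simp [mem_ES, mem_inter]; tauto
  have key3 : e ∉ ES ends S ∪ ES ends T := by
    intro hmem
    rw [mem_union, mem_ES, mem_ES] at hmem
    tauto
  have key2 : insert e (ES ends S ∪ ES ends T) ⊆ ES ends (S ∪ T) := by
    intro x hx
    simp only [mem_insert, mem_union, mem_ES] at hx ⊢
    rcases hx with rfl | h | h
    · exact ⟨Or.inl haS, Or.inr hbT⟩
    · exact ⟨Or.inl h.1, Or.inl h.2⟩
    · exact ⟨Or.inr h.1, Or.inr h.2⟩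
  have h1 := Finset.sum_union_inter (s₁ := ES ends S) (s₂ := ES ends T) (f := β)
  have h2 : β e + ∑ x ∈ ES ends S ∪ ES ends T, β x ≤ ∑ x ∈ ES ends (S ∪ T), β x := by
    rw [← Finset.sum_insert key3]
    exact Finset.sum_le_sum_of_subset key2
  have h3 := Finset.sum_union_inter (s₁ := S) (s₂ := T) (f := α)
  have h4 := hii (S ∪ T)
  have h5 := hii (S ∩ T)
  rw [key1] at h1
  omega

lemma step {V E : Type} [Fintype V] [Fintype E] [DecidableEq V] [DecidableEq E]
    (ends : E → V × V) (α : V → ℕ) (β : E → ℕ) (n : ℕ)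
    (e : E) (hβe : 1 ≤ β e) (hsum : ∑ e' : E, β e' = n + 1)
    (hi : ∑ v : V, α v = ∑ e' : E, β e')
    (hii : ∀ S : Finset V, ∑ e' ∈ ES ends S, β e' ≤ ∑ v ∈ S, α v)
    (u vo : V) (d : ℕ × ℕ) (hd : d.1 + d.2 = 1)
    (hdv : ∀ x : V, (if (ends e).1 = x then d.1 else 0) +
        (if (ends e).2 = x then d.2 else 0) = if x = u then 1 else 0)
    (hmem : ∀ S : Finset V, e ∈ ES ends S ↔ (u ∈ S ∧ vo ∈ S))
    (hgood : ∀ S : Finset V, u ∈ S → vo ∉ S →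
        ∑ e' ∈ ES ends S, β e' + 1 ≤ ∑ v ∈ S, α v)
    (ih : ∀ (α : V → ℕ) (β : E → ℕ), ∑ e' : E, β e' = n →
      ∑ v : V, α v = ∑ e' : E, β e' →
      (∀ S : Finset V, ∑ e' ∈ ES ends S, β e' ≤ ∑ v ∈ S, α v) →
      ∃ w : E → ℕ × ℕ, (∀ e', (w e').1 + (w e').2 = β e') ∧
        ∀ v : V, (∑ e' : E, ((if (ends e').1 = v then (w e').1 else 0) +
          (if (ends e').2 = v then (w e').2 else 0))) = α v) :
    ∃ w : E → ℕ × ℕ, (∀ e', (w e').1 + (w e').2 = β e') ∧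
      ∀ v : V, (∑ e' : E, ((if (ends e').1 = v then (w e').1 else 0) +
        (if (ends e').2 = v then (w e').2 else 0))) = α v := by
  have hαu : 1 ≤ α u := by
    by_cases huv : u = vo
    · have heu : e ∈ ES ends {u} := (hmem {u}).2 ⟨mem_singleton_self u, by
        rw [← huv]; exact mem_singleton_self u⟩
      have h1 : β e ≤ ∑ e' ∈ ES ends {u}, β e' :=
        Finset.single_le_sum (fun _ _ => Nat.zero_le _) heu
      have h2 := hii {u}
      rw [Finset.sum_singleton] at h2
      omega
    · have h1 := hgood {u} (mem_singleton_self u) (by simp [Ne.symm huv])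
      rw [Finset.sum_singleton] at h1
      omega
  set α' := Function.update α u (α u - 1) with hα'def
  set β' := Function.update β e (β e - 1) with hβ'def
  have hα'u : α' u = α u - 1 := Function.update_self _ _ _
  have hβ'e : β' e = β e - 1 := Function.update_self _ _ _
  have hα'x : ∀ x, x ≠ u → α' x = α x := fun x hx => Function.update_of_ne hx _ _
  have hβ'x : ∀ x, x ≠ e → β' x = β x := fun x hx => Function.update_of_ne hx _ _
  -- total sums
  have hβtot : ∑ e' : E, β' e' + 1 = ∑ e' : E, β e' := by
    have h1 := Finset.add_sum_erase univ β (mem_univ e)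
    have h2 := Finset.add_sum_erase univ β' (mem_univ e)
    have h3 : ∑ x ∈ univ.erase e, β' x = ∑ x ∈ univ.erase e, β x :=
      Finset.sum_congr rfl fun x hx => hβ'x x (Finset.ne_of_mem_erase hx)
    omega
  have hαtot : ∑ v : V, α' v + 1 = ∑ v : V, α v := by
    have h1 := Finset.add_sum_erase univ α (mem_univ u)
    have h2 := Finset.add_sum_erase univ α' (mem_univ u)
    have h3 : ∑ x ∈ univ.erase u, α' x = ∑ x ∈ univ.erase u, α x :=
      Finset.sum_congr rfl fun x hx => hα'x x (Finset.ne_of_mem_erase hx)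
    omega
  have hsum' : ∑ e' : E, β' e' = n := by omega
  have hi' : ∑ v : V, α' v = ∑ e' : E, β' e' := by omega
  have hii' : ∀ S : Finset V, ∑ e' ∈ ES ends S, β' e' ≤ ∑ v ∈ S, α' v := by
    intro S
    by_cases huS : u ∈ S
    · have hαS : ∑ v ∈ S, α' v + 1 = ∑ v ∈ S, α v := by
        have h1 := Finset.add_sum_erase S α huS
        have h2 := Finset.add_sum_erase S α' huS
        have h3 : ∑ x ∈ S.erase u, α' x = ∑ x ∈ S.erase u, α x :=
          Finset.sum_congr rfl fun x hx => hα'x x (Finset.ne_of_mem_erase hx)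
        omega
      by_cases hvS : vo ∈ S
      · have heS : e ∈ ES ends S := (hmem S).2 ⟨huS, hvS⟩
        have h1 := Finset.add_sum_erase _ β heS
        have h2 := Finset.add_sum_erase _ β' heS
        have h3 : ∑ x ∈ (ES ends S).erase e, β' x = ∑ x ∈ (ES ends S).erase e, β x :=
          Finset.sum_congr rfl fun x hx => hβ'x x (Finset.ne_of_mem_erase hx)
        have h4 := hii S
        omega
      · have h4 := hgood S huS hvS
        have heS : e ∉ ES ends S := fun h => hvS ((hmem S).1 h).2
        have h5 : ∑ x ∈ ES ends S, β' x = ∑ x ∈ ES ends S, β x :=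
          Finset.sum_congr rfl fun x hx => hβ'x x (by rintro rfl; exact heS hx)
        omega
    · have h5 : ∑ v ∈ S, α' v = ∑ v ∈ S, α v :=
        Finset.sum_congr rfl fun x hx => hα'x x (by rintro rfl; exact huS hx)
      have heS : e ∉ ES ends S := fun h => huS ((hmem S).1 h).1
      have h6 : ∑ x ∈ ES ends S, β' x = ∑ x ∈ ES ends S, β x :=
        Finset.sum_congr rfl fun x hx => hβ'x x (by rintro rfl; exact heS hx)
      have := hii S
      omega
  obtain ⟨w', hw1, hw2⟩ := ih α' β' hsum' hi' hii'
  set W : E → ℕ × ℕ := fun e' => if e' = e then ((w' e').1 + d.1, (w' e').2 + d.2) else w' e'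
    with hWdef
  have hWe : W e = ((w' e).1 + d.1, (w' e).2 + d.2) := by rw [hWdef]; simp
  have hWne : ∀ e', e' ≠ e → W e' = w' e' := fun e' h => by rw [hWdef]; simp [h]
  refine ⟨W, ?_, ?_⟩
  · intro e'
    by_cases h : e' = e
    · rw [h, hWe]
      show (w' e).1 + d.1 + ((w' e).2 + d.2) = β e
      have h1 := hw1 e
      omega
    · rw [hWne e' h, hw1 e', hβ'x e' h]
  · intro x
    have hx' : α' x + (if x = u then 1 else 0) = α x := by
      by_cases h : x = u
      · subst h; rw [if_pos rfl, hα'u]; omega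
      · rw [if_neg h, hα'x x h]; omega
    have pointwise : ∀ e' : E,
        ((if (ends e').1 = x then (W e').1 else 0) +
          (if (ends e').2 = x then (W e').2 else 0)) =
        ((if (ends e').1 = x then (w' e').1 else 0) +
          (if (ends e').2 = x then (w' e').2 else 0)) +
        (if e' = e then (if x = u then 1 else 0) else 0) := by
      intro e'
      by_cases h : e' = e
      · rw [h, if_pos rfl, hWe, ← hdv x]
        by_cases ha : (ends e).1 = x <;> by_cases hb : (ends e).2 = x <;>
          simp [ha, hb] <;> omega
      · rw [if_neg h, hWne e' h]
        omega
    calc ∑ e' : E, ((if (ends e').1 = x then (W e').1 else 0) +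
          (if (ends e').2 = x then (W e').2 else 0))
        = ∑ e' : E, (((if (ends e').1 = x then (w' e').1 else 0) +
            (if (ends e').2 = x then (w' e').2 else 0)) +
          (if e' = e then (if x = u then 1 else 0) else 0)) :=
          Finset.sum_congr rfl fun e' _ => pointwise e'
      _ = (∑ e' : E, ((if (ends e').1 = x then (w' e').1 else 0) +
            (if (ends e').2 = x then (w' e').2 else 0))) +
          ∑ e' : E, (if e' = e then (if x = u then 1 else 0) else 0) :=
          Finset.sum_add_distrib
      _ = α' x + (if x = u then 1 else 0) := by
          rw [hw2 x, Finset.sum_ite_eq' univ e fun _ => (if x = u then 1 else 0)]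
          simp
      _ = α x := hx'

lemma aux_exists {V E : Type} [Fintype V] [Fintype E] [DecidableEq V] [DecidableEq E]
    (ends : E → V × V) :
    ∀ (n : ℕ) (α : V → ℕ) (β : E → ℕ), ∑ e : E, β e = n →
      ∑ v : V, α v = ∑ e : E, β e →
      (∀ S : Finset V, ∑ e ∈ ES ends S, β e ≤ ∑ v ∈ S, α v) →
      ∃ w : E → ℕ × ℕ, (∀ e, (w e).1 + (w e).2 = β e) ∧
        ∀ v : V, (∑ e : E, ((if (ends e).1 = v then (w e).1 else 0) +
          (if (ends e).2 = v then (w e).2 else 0))) = α v := by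
  intro n
  induction n with
  | zero =>
    intro α β hsum hi _
    have hβ : ∀ e' : E, β e' = 0 := by
      intro e'
      have := Finset.single_le_sum (f := β) (fun _ _ => Nat.zero_le _) (mem_univ e')
      omega
    have hα : ∀ v : V, α v = 0 := by
      intro v
      have := Finset.single_le_sum (f := α) (fun _ _ => Nat.zero_le _) (mem_univ v)
      omega
    exact ⟨fun _ => (0, 0), fun e => by simp [hβ e], fun v => by simp [hα v]⟩
  | succ n ih =>
    intro α β hsum hi hii
    obtain ⟨e, hβe⟩ : ∃ e : E, 1 ≤ β e := by
      by_contra h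
      push_neg at h
      have : ∑ e : E, β e = 0 := Finset.sum_eq_zero fun e _ => by have := h e; omega
      omega
    obtain hg | hg := good_exists ends α β e hβe hii
    · exact step ends α β n e hβe hsum hi hii (ends e).1 (ends e).2 (1, 0) rfl
        (fun x => by by_cases h : (ends e).1 = x <;>
          simp [h, eq_comm (a := x) (b := (ends e).1)])
        (fun S => mem_ES ends S e) hg ih
    · exact step ends α β n e hβe hsum hi hii (ends e).2 (ends e).1 (0, 1) rfl
        (fun x => by by_cases h : (ends e).2 = x <;>
          simp [h, eq_comm (a := x) (b := (ends e).2)])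
        (fun S => by rw [mem_ES]; tauto) hg ih

theorem stmt1 (V E : Type) [Fintype V] [Fintype E] [DecidableEq V]
    (ends : E → V × V) (α : V → ℕ) (β : E → ℕ) :
    (∃ w : E → ℕ × ℕ, (∀ e, (w e).1 + (w e).2 = β e) ∧
        ∀ v : V, (∑ e : E, ((if (ends e).1 = v then (w e).1 else 0) +
          (if (ends e).2 = v then (w e).2 else 0))) = α v) ↔
      ((∑ v : V, α v = ∑ e : E, β e) ∧
        ∀ S : Finset V,
          ∑ e ∈ univ.filter (fun e => (ends e).1 ∈ S ∧ (ends e).2 ∈ S), β e ≤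
            ∑ v ∈ S, α v) := by
  classical
  constructor
  · rintro ⟨w, hw1, hw2⟩
    constructor
    · calc ∑ v : V, α v = ∑ v : V, ∑ e : E, ((if (ends e).1 = v then (w e).1 else 0) +
          (if (ends e).2 = v then (w e).2 else 0)) := by
            exact (Finset.sum_congr rfl fun v _ => (hw2 v)).symm
        _ = ∑ e : E, ∑ v : V, ((if (ends e).1 = v then (w e).1 else 0) +
          (if (ends e).2 = v then (w e).2 else 0)) := Finset.sum_comm
        _ = ∑ e : E, β e := by
            refine Finset.sum_congr rfl fun e _ => ?_
            rw [Finset.sum_add_distrib, Finset.sum_ite_eq, Finset.sum_ite_eq]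
            simp [hw1 e]
    · intro S
      have key : ∀ e ∈ univ.filter (fun e => (ends e).1 ∈ S ∧ (ends e).2 ∈ S),
          β e = ∑ v ∈ S, ((if (ends e).1 = v then (w e).1 else 0) +
            (if (ends e).2 = v then (w e).2 else 0)) := by
        intro e he
        rw [mem_filter] at he
        rw [Finset.sum_add_distrib, Finset.sum_ite_eq, Finset.sum_ite_eq,
          if_pos he.2.1, if_pos he.2.2, hw1 e]
      calc ∑ e ∈ univ.filter (fun e => (ends e).1 ∈ S ∧ (ends e).2 ∈ S), β e
          = ∑ e ∈ univ.filter (fun e => (ends e).1 ∈ S ∧ (ends e).2 ∈ S),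
            ∑ v ∈ S, ((if (ends e).1 = v then (w e).1 else 0) +
              (if (ends e).2 = v then (w e).2 else 0)) := Finset.sum_congr rfl key
        _ ≤ ∑ e : E, ∑ v ∈ S, ((if (ends e).1 = v then (w e).1 else 0) +
              (if (ends e).2 = v then (w e).2 else 0)) :=
            Finset.sum_le_sum_of_subset (filter_subset _ _)
        _ = ∑ v ∈ S, ∑ e : E, ((if (ends e).1 = v then (w e).1 else 0) +
              (if (ends e).2 = v then (w e).2 else 0)) := Finset.sum_comm
        _ = ∑ v ∈ S, α v := Finset.sum_congr rfl fun v _ => hw2 v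
  · rintro ⟨hi, hii⟩
    exact aux_exists ends (∑ e : E, β e) α β rfl hi hii
end

section
/- In any d-branching mobile (d ≥ 3), the excess, defined as the number of edges plus the number of white-white edges minus the number of buds, equals -d. -/
open Finset

/-- A combinatorial model of a weighted mobile: a finite plane tree with vertices colored
black (`black v = true`) or white, a number `buds v` of dangling buds at each (black)
vertex, and an ℕ-weight on each of the two half-edges of each edge.  The ℕ-mobile
conditions require weights to be positive at white endpoints and zero at black
endpoints. -/
structure Mobile where
  V : Type
  E : Type
  [fintypeV : Fintype V]
  [fintypeE : Fintype E]
  [decV : DecidableEq V]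
  [decE : DecidableEq E]
  ends : E → V × V
  black : V → Bool
  buds : V → ℕ
  w : E → ℕ × ℕ
  connected : ∀ x y : V,
    Relation.ReflTransGen (fun a b => ∃ e, ends e = (a, b) ∨ ends e = (b, a)) x y
  treeCard : Fintype.card V = Fintype.card E + 1
  budsOnlyBlack : ∀ v, black v = false → buds v = 0
  posWhite : ∀ e, (black (ends e).1 = false → 0 < (w e).1) ∧
    (black (ends e).2 = false → 0 < (w e).2)
  zeroBlack : ∀ e, (black (ends e).1 = true → (w e).1 = 0) ∧
    (black (ends e).2 = true → (w e).2 = 0)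

attribute [instance] Mobile.fintypeV Mobile.fintypeE Mobile.decV Mobile.decE

/-- Degree of a vertex, counting buds. -/
def Mobile.degree (M : Mobile) (v : M.V) : ℕ :=
  M.buds v + ∑ e : M.E, ((if (M.ends e).1 = v then 1 else 0) +
    (if (M.ends e).2 = v then 1 else 0))

/-- Weight of a vertex: sum of the weights of its incident (non-bud) half-edges. -/
def Mobile.vertexWeight (M : Mobile) (v : M.V) : ℕ :=
  ∑ e : M.E, ((if (M.ends e).1 = v then (M.w e).1 else 0) +
    (if (M.ends e).2 = v then (M.w e).2 else 0))

/-- Weight of an edge: sum of the weights of its two half-edges. -/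
def Mobile.edgeWeight (M : Mobile) (e : M.E) : ℕ := (M.w e).1 + (M.w e).2

/-- Number of edges. -/
def Mobile.numEdges (M : Mobile) : ℕ := Fintype.card M.E

/-- Number of white-white edges. -/
def Mobile.numWW (M : Mobile) : ℕ :=
  (univ.filter (fun e : M.E =>
    M.black (M.ends e).1 = false ∧ M.black (M.ends e).2 = false)).card

/-- Total number of buds. -/
def Mobile.numBuds (M : Mobile) : ℕ := ∑ v : M.V, M.buds v

/-- Number of black vertices. -/
def Mobile.numBlack (M : Mobile) : ℕ := (univ.filter (fun v : M.V => M.black v = true)).card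

/-- Number of white vertices. -/
def Mobile.numWhite (M : Mobile) : ℕ := (univ.filter (fun v : M.V => M.black v = false)).card

/-- The excess of a mobile: number of edges plus number of white-white edges minus the
number of buds. -/
def Mobile.excess (M : Mobile) : ℤ :=
  (M.numEdges : ℤ) + (M.numWW : ℤ) - (M.numBuds : ℤ)

/-- A `d`-branching mobile: every black vertex has degree `d`, every white vertex has
weight `d`, and every edge has weight `d - 2`. -/
def Mobile.IsDBranching (M : Mobile) (d : ℕ) : Prop :=
  (∀ v, M.black v = true → M.degree v = d) ∧
  (∀ v, M.black v = false → M.vertexWeight v = d) ∧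
  (∀ e, M.edgeWeight e = d - 2)

/-- In any `d`-branching mobile (`d ≥ 3`), the excess equals `-d`. -/
theorem stmt5 (M : Mobile) (d : ℕ) (hd : 3 ≤ d) (h : M.IsDBranching d) :
    M.excess = -(d : ℤ) := by
  classical
  obtain ⟨hdeg, hwt, hew⟩ := h
  -- no black-black edges
  have hBB : ∀ e : M.E, M.black (M.ends e).1 = false ∨ M.black (M.ends e).2 = false := by
    intro e
    by_contra hc
    push_neg at hc
    obtain ⟨h1, h2⟩ := hc
    rw [Bool.ne_false_iff] at h1 h2
    have z1 := (M.zeroBlack e).1 h1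
    have z2 := (M.zeroBlack e).2 h2
    have he := hew e
    rw [Mobile.edgeWeight, z1, z2] at he
    omega
  -- the number of black half-edges
  set Hb : ℕ := ∑ e : M.E, ((if M.black (M.ends e).1 = true then 1 else 0) +
    (if M.black (M.ends e).2 = true then 1 else 0)) with hHbdef
  -- f2 : numWW + Hb = numEdges
  have f2 : M.numWW + Hb = M.numEdges := by
    rw [Mobile.numWW, Finset.card_filter, Mobile.numEdges, ← Finset.card_univ,
      Finset.card_eq_sum_ones, hHbdef, ← Finset.sum_add_distrib]
    apply Finset.sum_congr rfl
    intro e _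
    rcases hBB e with h1 | h1 <;>
      cases hb1 : M.black (M.ends e).1 <;> cases hb2 : M.black (M.ends e).2 <;> simp_all
  -- f3 : numBuds + Hb = d * numBlack
  have f3 : M.numBuds + Hb = d * M.numBlack := by
    have : ∑ v ∈ univ.filter (fun v : M.V => M.black v = true), M.degree v
        = d * M.numBlack := by
      rw [Finset.sum_congr rfl (fun v hv => hdeg v (Finset.mem_filter.mp hv).2),
        Finset.sum_const, Mobile.numBlack, smul_eq_mul, mul_comm]
    rw [← this]
    unfold Mobile.degree
    rw [Finset.sum_add_distrib]
    congr 1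
    · -- buds sum over black vertices equals total buds
      rw [Mobile.numBuds]
      symm
      apply Finset.sum_filter_of_ne
      intro v _ hv
      by_contra hb
      exact hv (M.budsOnlyBlack v (by revert hb; cases M.black v <;> simp) ▸ rfl)
    · rw [Finset.sum_comm]
      apply Finset.sum_congr rfl
      intro e _
      rw [Finset.sum_add_distrib, Finset.sum_ite_eq, Finset.sum_ite_eq]
      simp [Finset.mem_filter]
  -- vertex weight of any black vertex is 0
  have hblack0 : ∀ v, M.black v = true → M.vertexWeight v = 0 := by
    intro v hv
    rw [Mobile.vertexWeight]
    apply Finset.sum_eq_zero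
    intro e _
    have z := M.zeroBlack e
    split_ifs with h1 h2 h2 <;> simp_all [z.1, z.2]
  -- total weight identities
  have f4 : d * M.numWhite = M.numEdges * (d - 2) := by
    have hsum : ∑ v : M.V, M.vertexWeight v = ∑ e : M.E, M.edgeWeight e := by
      unfold Mobile.vertexWeight Mobile.edgeWeight
      rw [Finset.sum_comm]
      apply Finset.sum_congr rfl
      intro e _
      rw [Finset.sum_add_distrib, Finset.sum_ite_eq, Finset.sum_ite_eq]
      simp
    have hright : ∑ e : M.E, M.edgeWeight e = M.numEdges * (d - 2) := by
      rw [Finset.sum_congr rfl (fun e _ => hew e), Finset.sum_const, smul_eq_mul,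
        Mobile.numEdges, Finset.card_univ]
    have hleft : ∑ v : M.V, M.vertexWeight v = d * M.numWhite := by
      rw [← Finset.sum_filter_add_sum_filter_not univ (fun v => M.black v = false)]
      have h1 : ∑ v ∈ univ.filter (fun v : M.V => M.black v = false), M.vertexWeight v
          = d * M.numWhite := by
        rw [Finset.sum_congr rfl (fun v hv => hwt v (Finset.mem_filter.mp hv).2),
          Finset.sum_const, Mobile.numWhite, smul_eq_mul, mul_comm]
      have h2 : ∑ v ∈ univ.filter (fun v : M.V => ¬ M.black v = false), M.vertexWeight v
          = 0 := by
        apply Finset.sum_eq_zero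
        intro v hv
        have hb := (Finset.mem_filter.mp hv).2
        apply hblack0
        revert hb
        cases M.black v <;> simp
      rw [h1, h2, add_zero]
    rw [← hleft, hsum, hright]
  -- f1 : numBlack + numWhite = numEdges + 1
  have f1 : M.numBlack + M.numWhite = M.numEdges + 1 := by
    have : M.numBlack + M.numWhite = Fintype.card M.V := by
      rw [Mobile.numBlack, Mobile.numWhite, ← Finset.card_univ]
      have heq : (univ.filter (fun v : M.V => M.black v = false))
          = (univ.filter (fun v : M.V => ¬ M.black v = true)) := by
        apply Finset.filter_congr
        intro v _
        cases M.black v <;> simp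
      rw [heq]
      exact Finset.card_filter_add_card_filter_not _
    rw [this, M.treeCard, Mobile.numEdges]
  -- turn f4 into a linear identity
  have f4' : d * M.numWhite + 2 * M.numEdges = d * M.numEdges := by
    rw [f4]
    have : M.numEdges * (d - 2) + 2 * M.numEdges = M.numEdges * d := by
      rw [mul_comm 2 M.numEdges, ← Nat.mul_add, Nat.sub_add_cancel (by omega)]
    rw [this, mul_comm]
  have f5 : d * M.numBlack + d * M.numWhite = d * M.numEdges + d := by
    rw [← Nat.mul_add, f1, Nat.mul_add, Nat.mul_one]
  unfold Mobile.excess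
  generalize hA : d * M.numBlack = A at f3 f5
  generalize hC : d * M.numWhite = C at f4' f5
  generalize hD : d * M.numEdges = D at f4' f5
  omega
end

section
/- If d = 2b is even, then in any d-branching mobile every half-edge has an even weight (lying in {0, 2, ..., d-2}). -/
open Finset

lemma mobile_parity_key : ∀ (n : ℕ) (V E : Type) [Fintype V] [Fintype E]
    [DecidableEq V] [DecidableEq E] (ends : E → V × V) (wt : E → ℕ × ℕ),
    Fintype.card E = n →
    (∀ x y : V, Relation.ReflTransGen
      (fun a b => ∃ e, ends e = (a, b) ∨ ends e = (b, a)) x y) →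
    Fintype.card V = Fintype.card E + 1 →
    (∀ e, Even ((wt e).1 + (wt e).2)) →
    (∀ v, Even (∑ e, ((if (ends e).1 = v then (wt e).1 else 0) +
      (if (ends e).2 = v then (wt e).2 else 0)))) →
    ∀ e, Even (wt e).1 ∧ Even (wt e).2 := by
  intro n
  induction n using Nat.strong_induction_on with
  | _ n IH =>
  intro V E _ _ _ _ ends wt hn conn hcard hedge hvert e
  rcases Nat.eq_zero_or_pos n with rfl | hpos
  · exact ((Fintype.card_eq_zero_iff.mp hn).false e).elim
  have hEpos : 0 < Fintype.card E := hn ▸ hpos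
  -- degree counting
  have hsum : ∑ v : V, (∑ e : E, ((if (ends e).1 = v then 1 else 0) +
      (if (ends e).2 = v then 1 else 0))) = 2 * Fintype.card E := by
    rw [Finset.sum_comm]
    have h1 : ∀ e : E, ∑ v : V, ((if (ends e).1 = v then 1 else 0) +
        (if (ends e).2 = v then 1 else 0)) = 2 := by
      intro e
      rw [Finset.sum_add_distrib, Finset.sum_ite_eq, Finset.sum_ite_eq]
      simp
    rw [Finset.sum_congr rfl fun e _ => h1 e]
    simp [mul_comm]
  have hleaf : ∃ v0 : V, (∑ e : E, ((if (ends e).1 = v0 then 1 else 0) +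
      (if (ends e).2 = v0 then 1 else 0))) ≤ 1 := by
    by_contra hno
    push_neg at hno
    have h2 : 2 * Fintype.card V ≤ ∑ v : V, (∑ e : E, ((if (ends e).1 = v then 1 else 0) +
        (if (ends e).2 = v then 1 else 0))) := by
      calc 2 * Fintype.card V = ∑ _v : V, 2 := by simp [mul_comm]
      _ ≤ _ := Finset.sum_le_sum fun v _ => hno v
    rw [hsum] at h2
    omega
  obtain ⟨v0, hv0⟩ := hleaf
  have hzero : ∀ v : V, (∑ e : E, ((if (ends e).1 = v then 1 else 0) +
      (if (ends e).2 = v then 1 else 0))) = 0 →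
      ∀ e : E, (ends e).1 ≠ v ∧ (ends e).2 ≠ v := by
    intro v hv e
    have h3 := (Finset.sum_eq_zero_iff.mp hv) e (Finset.mem_univ e)
    constructor <;> intro h <;> simp [h] at h3
  have hdeg1 : (∑ e : E, ((if (ends e).1 = v0 then 1 else 0) +
      (if (ends e).2 = v0 then 1 else 0))) = 1 := by
    rcases Nat.le_one_iff_eq_zero_or_eq_one.mp hv0 with h0 | h1
    · exfalso
      obtain ⟨e1⟩ := Fintype.card_pos_iff.mp hEpos
      have hz := hzero v0 h0
      have hne : (ends e1).1 ≠ v0 := fun h => (hz e1).1 h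
      rcases (conn v0 (ends e1).1).cases_head with heq | ⟨c, ⟨e2, h2⟩, _⟩
      · exact hne heq.symm
      · rcases h2 with h2 | h2
        · exact (hz e2).1 (by rw [h2])
        · exact (hz e2).2 (by rw [h2])
    · exact h1
  -- extract the unique edge e0 at v0
  obtain ⟨e0, -, hne0⟩ := Finset.exists_ne_zero_of_sum_ne_zero
    (by rw [hdeg1]; exact one_ne_zero :
      (∑ e : E, ((if (ends e).1 = v0 then 1 else 0) +
        (if (ends e).2 = v0 then 1 else 0))) ≠ 0)
  have hsplit := Finset.add_sum_erase (univ : Finset E)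
    (fun e => ((if (ends e).1 = v0 then 1 else 0) + (if (ends e).2 = v0 then 1 else 0)))
    (Finset.mem_univ e0)
  rw [hdeg1] at hsplit
  have hfe0 : ((if (ends e0).1 = v0 then 1 else 0) + (if (ends e0).2 = v0 then 1 else 0)) = 1 ∧
      (∑ e ∈ (univ : Finset E).erase e0,
        ((if (ends e).1 = v0 then 1 else 0) + (if (ends e).2 = v0 then 1 else 0))) = 0 := by
    constructor <;> omega
  have h0 : ∀ e : E, e ≠ e0 → (ends e).1 ≠ v0 ∧ (ends e).2 ≠ v0 := by
    intro e he
    have h3 := (Finset.sum_eq_zero_iff.mp hfe0.2) e (by simp [Finset.mem_erase, he])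
    constructor <;> intro h <;> simp [h] at h3
  obtain ⟨u, hu, hends0⟩ : ∃ u : V, u ≠ v0 ∧ (ends e0 = (v0, u) ∨ ends e0 = (u, v0)) := by
    have h4 := hfe0.1
    by_cases h1 : (ends e0).1 = v0 <;> by_cases h2 : (ends e0).2 = v0
    · simp [h1, h2] at h4
    · exact ⟨(ends e0).2, h2, Or.inl (Prod.ext h1 rfl)⟩
    · exact ⟨(ends e0).1, h1, Or.inr (Prod.ext rfl h2)⟩
    · simp [h1, h2] at h4
  -- the half-edge weights of e0 are even
  have hwte0 : Even (wt e0).1 ∧ Even (wt e0).2 := by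
    have hs := hvert v0
    rw [Finset.sum_eq_single e0 (fun e _ hne => by
        rcases h0 e hne with ⟨ha, hb⟩; simp [ha, hb])
      (fun h => absurd (Finset.mem_univ e0) h)] at hs
    rcases hends0 with h | h
    · rw [h] at hs
      simp [hu] at hs
      exact ⟨hs, (Nat.even_add.mp (hedge e0)).mp hs⟩
    · rw [h] at hs
      simp [hu] at hs
      exact ⟨(Nat.even_add.mp (hedge e0)).mpr hs, hs⟩
  by_cases hee : e = e0
  · exact hee ▸ hwte0
  -- set up the smaller mobile
  let ends' : {e : E // e ≠ e0} → {v : V // v ≠ v0} × {v : V // v ≠ v0} := fun e =>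
    (⟨(ends e.1).1, (h0 e.1 e.2).1⟩, ⟨(ends e.1).2, (h0 e.1 e.2).2⟩)
  let wt' : {e : E // e ≠ e0} → ℕ × ℕ := fun e => wt e.1
  have hcV' : Fintype.card {v : V // v ≠ v0} = Fintype.card V - 1 := by
    have h5 := Fintype.card_subtype_compl (fun v : V => v = v0)
    simpa [Fintype.card_subtype_eq] using h5
  have hcE' : Fintype.card {e : E // e ≠ e0} = Fintype.card E - 1 := by
    have h5 := Fintype.card_subtype_compl (fun e : E => e = e0)
    simpa [Fintype.card_subtype_eq] using h5
  have hcard' : Fintype.card {v : V // v ≠ v0} = Fintype.card {e : E // e ≠ e0} + 1 := by omega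
  let proj : V → {v : V // v ≠ v0} := fun v => if h : v = v0 then ⟨u, hu⟩ else ⟨v, h⟩
  have hproj : ∀ (v : V) (h : v ≠ v0), proj v = ⟨v, h⟩ := fun v h => dif_neg h
  have hstep : ∀ a b : V, (∃ e, ends e = (a, b) ∨ ends e = (b, a)) →
      Relation.ReflTransGen
        (fun a b : {v : V // v ≠ v0} => ∃ e, ends' e = (a, b) ∨ ends' e = (b, a))
        (proj a) (proj b) := by
    rintro a b ⟨e, he⟩
    by_cases hee' : e = e0
    · subst hee'
      have hab : (a = v0 ∧ b = u) ∨ (a = u ∧ b = v0) := by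
        rcases hends0 with h | h <;> rcases he with he | he <;> rw [h] at he <;>
          simp only [Prod.mk.injEq] at he <;> tauto
      have hvu : proj v0 = proj u := by
        simp [proj, hu]
      rcases hab with ⟨rfl, rfl⟩ | ⟨rfl, rfl⟩
      · rw [hvu]
      · rw [hvu]
    · have ha := h0 e hee'
      rcases he with he | he
      · have h1 : a ≠ v0 := fun h => ha.1 (by rw [he, h])
        have h2 : b ≠ v0 := fun h => ha.2 (by rw [he, h])
        apply Relation.ReflTransGen.single
        refine ⟨⟨e, hee'⟩, Or.inl ?_⟩
        rw [hproj a h1, hproj b h2]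
        refine Prod.ext (Subtype.ext ?_) (Subtype.ext ?_)
        · show (ends e).1 = a
          rw [he]
        · show (ends e).2 = b
          rw [he]
      · have h1 : b ≠ v0 := fun h => ha.1 (by rw [he, h])
        have h2 : a ≠ v0 := fun h => ha.2 (by rw [he, h])
        apply Relation.ReflTransGen.single
        refine ⟨⟨e, hee'⟩, Or.inr ?_⟩
        rw [hproj a h2, hproj b h1]
        refine Prod.ext (Subtype.ext ?_) (Subtype.ext ?_)
        · show (ends e).1 = b
          rw [he]
        · show (ends e).2 = a
          rw [he]
  have conn' : ∀ x y : {v : V // v ≠ v0}, Relation.ReflTransGen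
      (fun a b : {v : V // v ≠ v0} => ∃ e, ends' e = (a, b) ∨ ends' e = (b, a)) x y := by
    rintro ⟨x, hx⟩ ⟨y, hy⟩
    have hh := conn x y
    rw [← hproj x hx, ← hproj y hy]
    clear hx hy
    induction hh with
    | refl => exact Relation.ReflTransGen.refl
    | tail _ hr ih => exact ih.trans (hstep _ _ hr)
  have hedge' : ∀ e' : {e : E // e ≠ e0}, Even ((wt' e').1 + (wt' e').2) := fun e' => hedge e'.1
  have hvert' : ∀ v' : {v : V // v ≠ v0}, Even (∑ e' : {e : E // e ≠ e0},
      ((if (ends' e').1 = v' then (wt' e').1 else 0) +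
      (if (ends' e').2 = v' then (wt' e').2 else 0))) := by
    intro v'
    have h1 : (∑ e' : {e : E // e ≠ e0}, ((if (ends' e').1 = v' then (wt' e').1 else 0) +
        (if (ends' e').2 = v' then (wt' e').2 else 0)))
        = ∑ e ∈ (univ : Finset E).erase e0, ((if (ends e).1 = v'.1 then (wt e).1 else 0) +
          (if (ends e).2 = v'.1 then (wt e).2 else 0)) := by
      rw [Finset.sum_subtype (p := fun e : E => e ≠ e0) ((univ : Finset E).erase e0)
        (fun e => by simp [Finset.mem_erase])
        (fun e => ((if (ends e).1 = v'.1 then (wt e).1 else 0) +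
          (if (ends e).2 = v'.1 then (wt e).2 else 0)))]
      refine Finset.sum_congr rfl fun e' _ => ?_
      have c1 : ((ends' e').1 = v') ↔ ((ends e'.1).1 = v'.1) := Subtype.ext_iff
      have c2 : ((ends' e').2 = v') ↔ ((ends e'.1).2 = v'.1) := Subtype.ext_iff
      rw [if_congr c1 rfl rfl, if_congr c2 rfl rfl]
    rw [h1]
    have h2 := Finset.add_sum_erase (univ : Finset E)
      (fun e => ((if (ends e).1 = v'.1 then (wt e).1 else 0) +
        (if (ends e).2 = v'.1 then (wt e).2 else 0))) (Finset.mem_univ e0)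
    have h3 : Even ((if (ends e0).1 = v'.1 then (wt e0).1 else 0) +
        (if (ends e0).2 = v'.1 then (wt e0).2 else 0)) := by
      rcases hwte0 with ⟨ha, hb⟩
      split_ifs
      · exact ha.add hb
      · exact ha.add Even.zero
      · exact Even.zero.add hb
      · exact Even.zero.add Even.zero
    have h4 := hvert v'.1
    rw [← h2] at h4
    exact (Nat.even_add.mp h4).mp h3
  have hlt : Fintype.card {e : E // e ≠ e0} < n := by omega
  exact IH (Fintype.card {e : E // e ≠ e0}) hlt _ _ ends' wt' rfl conn' hcard' hedge' hvert'
    ⟨e, hee⟩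

/-- If `d = 2b` is even, then in any `d`-branching mobile every
half-edge has an even weight lying in `{0, 2, ..., d-2}`. -/
theorem stmt6 (M : Mobile) (d b : ℕ) (hd : 3 ≤ d) (hb : d = 2 * b)
    (h : M.IsDBranching d) :
    ∀ e : M.E, (Even (M.w e).1 ∧ (M.w e).1 ≤ d - 2) ∧
      (Even (M.w e).2 ∧ (M.w e).2 ≤ d - 2) := by
  have hb2 : 2 ≤ b := by omega
  have hedge : ∀ e, Even ((M.w e).1 + (M.w e).2) := by
    intro e
    have he := h.2.2 e
    rw [Mobile.edgeWeight] at he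
    rw [he]
    exact ⟨b - 1, by omega⟩
  have hvert : ∀ v, Even (∑ e : M.E, ((if (M.ends e).1 = v then (M.w e).1 else 0) +
      (if (M.ends e).2 = v then (M.w e).2 else 0))) := by
    intro v
    cases hbv : M.black v with
    | true =>
      have hz : (∑ e : M.E, ((if (M.ends e).1 = v then (M.w e).1 else 0) +
          (if (M.ends e).2 = v then (M.w e).2 else 0))) = 0 := by
        apply Finset.sum_eq_zero
        intro e _
        have z1 : (M.ends e).1 = v → (M.w e).1 = 0 :=
          fun hh => (M.zeroBlack e).1 (by rw [hh, hbv])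
        have z2 : (M.ends e).2 = v → (M.w e).2 = 0 :=
          fun hh => (M.zeroBlack e).2 (by rw [hh, hbv])
        split_ifs with a1 a2 a2
        · simp [z1 a1, z2 a2]
        · simp [z1 a1]
        · simp [z2 a2]
        · rfl
      rw [hz]
      exact Even.zero
    | false =>
      have hw : (∑ e : M.E, ((if (M.ends e).1 = v then (M.w e).1 else 0) +
          (if (M.ends e).2 = v then (M.w e).2 else 0))) = d := h.2.1 v hbv
      rw [hw, hb]
      exact even_two_mul b
  have hkey := mobile_parity_key (Fintype.card M.E) M.V M.E M.ends M.w rfl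
    M.connected M.treeCard hedge hvert
  intro e
  have he := h.2.2 e
  rw [Mobile.edgeWeight] at he
  exact ⟨⟨(hkey e).1, by omega⟩, ⟨(hkey e).2, by omega⟩⟩
end

section
/- In any (p,d)-branching mobile (p ≥ d ≥ 3), the excess, defined as the number of edges plus the number of white-white edges minus the number of buds, equals d. -/
open Finset

/-- Adjacency in a mobile. -/
def Mobile.Adj (M : Mobile) (x y : M.V) : Prop :=
  ∃ e, M.ends e = (x, y) ∨ M.ends e = (y, x)

instance (M : Mobile) (s : M.V) : DecidablePred (fun v => M.Adj v s) := fun v => by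
  unfold Mobile.Adj; infer_instance

open SimpleGraph in
lemma conn_card_le {V : Type} [Fintype V] [DecidableEq V] (G : SimpleGraph V)
    [DecidableRel G.Adj] (hc : G.Connected) :
    Fintype.card V ≤ G.edgeFinset.card + 1 := by
  have hne := hc.nonempty
  inhabit V
  choose f hf using fun v => hc.exists_walk_length_eq_dist v default
  have hcard : Fintype.card V = (({default} : Finset V)ᶜ).card + 1 := by
    rw [Finset.card_compl, Finset.card_singleton,
      Nat.sub_add_cancel Fintype.card_pos]
  rw [hcard, add_le_add_iff_right]
  apply Finset.card_le_card_of_injOn (fun v => s(v, (f v).getVert 1))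
  · intro v hv
    have hv' : v ≠ default := by simpa using hv
    rw [Finset.mem_coe, SimpleGraph.mem_edgeFinset]
    exact Walk.adj_snd (Walk.not_nil_of_ne hv')
  · intro a ha b hb hab
    by_contra hne'
    have ha' : a ≠ default := by simpa using ha
    have hb' : b ≠ default := by simpa using hb
    have hna : ¬ (f a).Nil := Walk.not_nil_of_ne ha'
    have hnb : ¬ (f b).Nil := Walk.not_nil_of_ne hb'
    rw [Sym2.eq_iff] at hab
    obtain ⟨h1, h2⟩ | ⟨h1, h2⟩ := hab
    · exact hne' h1
    have hda : G.dist b default ≤ G.dist a default - 1 := by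
      have := G.dist_le (((f a).tail).copy h2 rfl)
      rw [Walk.length_copy] at this
      have hlen : (f a).tail.length + 1 = (f a).length :=
        Walk.length_tail_add_one hna
      have := hf a
      omega
    have hdb : G.dist a default ≤ G.dist b default - 1 := by
      have := G.dist_le (((f b).tail).copy h1.symm rfl)
      rw [Walk.length_copy] at this
      have hlen : (f b).tail.length + 1 = (f b).length :=
        Walk.length_tail_add_one hnb
      have := hf b
      omega
    have hpa : 0 < G.dist a default :=
      (hc a default).pos_dist_of_ne ha'
    have hpb : 0 < G.dist b default :=
      (hc b default).pos_dist_of_ne hb'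
    omega

lemma mobile_no_multi (M : Mobile) :
    Function.Injective (fun e : M.E => s((M.ends e).1, (M.ends e).2)) ∧
    ∀ e : M.E, (M.ends e).1 ≠ (M.ends e).2 := by
  classical
  haveI : Nonempty M.V := by
    have h := M.treeCard
    have : 0 < Fintype.card M.V := by omega
    exact Fintype.card_pos_iff.mp this
  set G : SimpleGraph M.V := SimpleGraph.fromRel (fun a b => ∃ e, M.ends e = (a, b)) with hG
  haveI : DecidableRel G.Adj := Classical.decRel _
  have hconn : G.Connected := by
    apply SimpleGraph.Connected.mk
    intro x y
    rw [SimpleGraph.reachable_iff_reflTransGen]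
    have hmono := Relation.ReflTransGen.mono
      (p := Relation.ReflTransGen G.Adj)
      (r := fun a b : M.V => ∃ e, M.ends e = (a, b) ∨ M.ends e = (b, a))
      (fun a b hab => by
        by_cases hab' : a = b
        · exact hab' ▸ Relation.ReflTransGen.refl
        · apply Relation.ReflTransGen.single
          rw [hG, SimpleGraph.fromRel_adj]
          refine ⟨hab', ?_⟩
          obtain ⟨e, he | he⟩ := hab
          · exact Or.inl ⟨e, he⟩
          · exact Or.inr ⟨e, he⟩)
      x y (M.connected x y)
    rwa [Relation.reflTransGen_idem] at hmono
  set fE : M.E → Sym2 M.V := fun e => s((M.ends e).1, (M.ends e).2) with hfE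
  have hsub : G.edgeFinset ⊆ Finset.image fE Finset.univ := by
    intro x hx
    induction x with
    | _ a b =>
      rw [SimpleGraph.mem_edgeFinset, hG, SimpleGraph.mem_edgeSet,
        SimpleGraph.fromRel_adj] at hx
      obtain ⟨hne, ⟨e, he⟩ | ⟨e, he⟩⟩ := hx
      · refine Finset.mem_image.2 ⟨e, Finset.mem_univ e, ?_⟩
        show s((M.ends e).1, (M.ends e).2) = s(a, b)
        rw [he]
      · refine Finset.mem_image.2 ⟨e, Finset.mem_univ e, ?_⟩
        show s((M.ends e).1, (M.ends e).2) = s(a, b)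
        rw [he]
        exact Sym2.eq_swap
  have hle1 : Fintype.card M.V ≤ G.edgeFinset.card + 1 := conn_card_le G hconn
  have hle2 : G.edgeFinset.card ≤ (Finset.image fE Finset.univ).card :=
    Finset.card_le_card hsub
  have hle3 : (Finset.image fE Finset.univ).card ≤ Fintype.card M.E := by
    simpa using Finset.card_image_le (s := (Finset.univ : Finset M.E)) (f := fE)
  have htree := M.treeCard
  have himg : (Finset.image fE Finset.univ).card = (Finset.univ : Finset M.E).card := by
    rw [Finset.card_univ]; omega
  have hinj : Function.Injective fE := fun a b hab =>
    Finset.injOn_of_card_image_eq himg (Finset.mem_univ a) (Finset.mem_univ b) hab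
  have hEq : G.edgeFinset = Finset.image fE Finset.univ :=
    Finset.eq_of_subset_of_card_le hsub (by rw [himg, Finset.card_univ]; omega)
  refine ⟨hinj, ?_⟩
  intro e
  have hmem : fE e ∈ G.edgeFinset := by
    rw [hEq]; exact Finset.mem_image_of_mem _ (Finset.mem_univ e)
  rw [SimpleGraph.mem_edgeFinset] at hmem
  have := SimpleGraph.not_isDiag_of_mem_edgeSet G hmem
  rw [hfE] at this
  simpa [Sym2.mk_isDiag_iff] using this

/-- In any `(p,d)`-branching mobile (`p ≥ d ≥ 3`), the excess equals
`d`.  A `(p,d)`-branching mobile is an ℕ-mobile in which every edge has weight `d-2`,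
every black vertex has degree `d` except one special black vertex `s` of degree `p`
with no buds, every neighbor of `s` is white, every white vertex not adjacent to `s`
has weight `d`, and the weights of the neighbors of `s` sum to `pd - p - d`. -/
theorem stmt8 (M : Mobile) (p d : ℕ) (hd : 3 ≤ d) (hdp : d ≤ p) (s : M.V)
    (hsblack : M.black s = true)
    (hsdeg : M.degree s = p) (hsbuds : M.buds s = 0)
    (hblack : ∀ v, v ≠ s → M.black v = true → M.degree v = d)
    (hneighwhite : ∀ v, M.Adj v s → M.black v = false)
    (hwhite : ∀ v, M.black v = false → ¬ M.Adj v s → M.vertexWeight v = d)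
    (hneigh : ∑ v ∈ univ.filter (fun v => M.Adj v s), M.vertexWeight v = p * d - p - d)
    (hedge : ∀ e, M.edgeWeight e = d - 2) :
    M.excess = (d : ℤ) := by
  classical
  -- no black-black edges
  have hBB : ∀ e : M.E, M.black (M.ends e).1 = false ∨ M.black (M.ends e).2 = false := by
    intro e
    cases hb1 : M.black (M.ends e).1 with
    | false => exact Or.inl rfl
    | true =>
      cases hb2 : M.black (M.ends e).2 with
      | false => exact Or.inr rfl
      | true =>
        exfalso
        have hz1 := (M.zeroBlack e).1 hb1
        have hz2 := (M.zeroBlack e).2 hb2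
        have he := hedge e
        unfold Mobile.edgeWeight at he
        omega
  obtain ⟨hinj, hloop⟩ := mobile_no_multi M
  set fE : M.E → Sym2 M.V := fun e => s((M.ends e).1, (M.ends e).2) with hfE
  -- neighbors of s are not s
  have hvs : ∀ v, M.Adj v s → v ≠ s := by
    intro v hv h
    have hw := hneighwhite v hv
    rw [h, hsblack] at hw
    exact Bool.noConfusion hw
  -- number of neighbors of s equals p
  have hA : (univ.filter (fun v => M.Adj v s)).card = p := by
    have hstep1 : M.degree s =
        (univ.filter (fun e : M.E => (M.ends e).1 = s ∨ (M.ends e).2 = s)).card := by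
      unfold Mobile.degree
      rw [hsbuds, zero_add, Finset.card_filter]
      apply Finset.sum_congr rfl
      intro e _
      have := hloop e
      by_cases h1 : (M.ends e).1 = s <;> by_cases h2 : (M.ends e).2 = s <;>
        simp_all
    have hstep2 : (univ.filter (fun e : M.E => (M.ends e).1 = s ∨ (M.ends e).2 = s)).card
        = (univ.filter (fun v => M.Adj v s)).card := by
      apply Finset.card_bij
        (fun e _ => if (M.ends e).1 = s then (M.ends e).2 else (M.ends e).1)
      · intro e he
        rw [Finset.mem_filter] at he
        rw [Finset.mem_filter]
        refine ⟨Finset.mem_univ _, ?_⟩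
        by_cases h1 : (M.ends e).1 = s
        · refine ⟨e, Or.inr ?_⟩
          simp only [h1, if_pos]
          exact Prod.ext h1 rfl
        · have h2 : (M.ends e).2 = s := he.2.resolve_left h1
          refine ⟨e, Or.inl ?_⟩
          simp only [h1, if_neg, if_false]
          exact Prod.ext rfl h2
      · intro e he e' he' hee
        rw [Finset.mem_filter] at he he'
        apply hinj
        have key : ∀ e'' : M.E, ((M.ends e'').1 = s ∨ (M.ends e'').2 = s) →
            fE e'' = s(s, if (M.ends e'').1 = s then (M.ends e'').2 else (M.ends e'').1) := by
          intro e'' h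
          by_cases h1 : (M.ends e'').1 = s
          · show s((M.ends e'').1, (M.ends e'').2) = _
            rw [if_pos h1, h1]
          · have h2 : (M.ends e'').2 = s := h.resolve_left h1
            show s((M.ends e'').1, (M.ends e'').2) = _
            rw [if_neg h1, h2]
            exact Sym2.eq_swap
        rw [key e he.2, key e' he'.2, hee]
      · intro v hv
        rw [Finset.mem_filter] at hv
        obtain ⟨e, he | he⟩ := hv.2
        · refine ⟨e, Finset.mem_filter.2 ⟨Finset.mem_univ _, Or.inr (by rw [he])⟩, ?_⟩
          have hne : (M.ends e).1 ≠ s := by rw [he]; exact hvs v hv.2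
          rw [if_neg hne, he]
        · refine ⟨e, Finset.mem_filter.2 ⟨Finset.mem_univ _, Or.inl (by rw [he])⟩, ?_⟩
          have h1 : (M.ends e).1 = s := by rw [he]
          rw [if_pos h1, he]
    rw [← hstep2, ← hstep1, hsdeg]
  -- sum of vertex weights equals sum of edge weights
  have hsum1 : ∑ v : M.V, M.vertexWeight v = ∑ e : M.E, M.edgeWeight e := by
    unfold Mobile.vertexWeight Mobile.edgeWeight
    rw [Finset.sum_comm]
    apply Finset.sum_congr rfl
    intro e _
    rw [Finset.sum_add_distrib, Finset.sum_ite_eq, Finset.sum_ite_eq]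
    simp
  have hsum2 : ∑ e : M.E, M.edgeWeight e = M.numEdges * (d - 2) := by
    rw [Finset.sum_congr rfl (fun e _ => hedge e), Finset.sum_const, smul_eq_mul,
      Finset.card_univ]
    rfl
  have hblackzero : ∀ v, M.black v = true → M.vertexWeight v = 0 := by
    intro v hv
    unfold Mobile.vertexWeight
    apply Finset.sum_eq_zero
    intro e _
    have hz := M.zeroBlack e
    have w1 : (if (M.ends e).1 = v then (M.w e).1 else 0) = 0 := by
      split
      · next h => exact hz.1 (by rw [h]; exact hv)
      · rfl
    have w2 : (if (M.ends e).2 = v then (M.w e).2 else 0) = 0 := by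
      split
      · next h => exact hz.2 (by rw [h]; exact hv)
      · rfl
    rw [w1, w2]
    rfl
  -- split the total weight
  have hsplitAdj : ∑ v : M.V, M.vertexWeight v
      = (p * d - p - d) + ∑ v ∈ univ.filter (fun v => ¬ M.Adj v s), M.vertexWeight v := by
    rw [← Finset.sum_filter_add_sum_filter_not univ (fun v => M.Adj v s) M.vertexWeight,
      hneigh]
  set x := (univ.filter (fun v => ¬ M.Adj v s ∧ M.black v = false)).card with hxdef
  have hnotadj : ∑ v ∈ univ.filter (fun v => ¬ M.Adj v s), M.vertexWeight v = x * d := by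
    have hcg : ∀ v ∈ univ.filter (fun v => ¬ M.Adj v s),
        M.vertexWeight v = if M.black v = false then d else 0 := by
      intro v hv
      rw [Finset.mem_filter] at hv
      cases hb : M.black v with
      | false => rw [if_pos rfl]; exact hwhite v hb hv.2
      | true => rw [if_neg (by simp)]; exact hblackzero v hb
    rw [Finset.sum_congr rfl hcg, ← Finset.sum_filter, Finset.filter_filter,
      Finset.sum_const, smul_eq_mul]
  have hcount : p + x = M.numWhite := by
    have hsplit := Finset.card_filter_add_card_filter_not
      (s := univ.filter (fun v : M.V => M.black v = false)) (p := fun v => M.Adj v s)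
    rw [Finset.filter_filter, Finset.filter_filter] at hsplit
    have h1 : (univ.filter (fun v : M.V => M.black v = false ∧ M.Adj v s))
        = univ.filter (fun v => M.Adj v s) := by
      apply Finset.filter_congr
      intro v _
      constructor
      · exact fun h => h.2
      · exact fun h => ⟨hneighwhite v h, h⟩
    have h2 : (univ.filter (fun v : M.V => M.black v = false ∧ ¬ M.Adj v s))
        = univ.filter (fun v => ¬ M.Adj v s ∧ M.black v = false) := by
      apply Finset.filter_congr
      intro v _
      exact and_comm
    rw [h1, h2, hA] at hsplit
    exact hsplit
  -- the black degree sum, two ways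
  have hsmem : s ∈ univ.filter (fun v : M.V => M.black v = true) :=
    Finset.mem_filter.2 ⟨Finset.mem_univ _, hsblack⟩
  have hdegsum : (∑ v ∈ univ.filter (fun v : M.V => M.black v = true), M.degree v) + d
      = p + M.numBlack * d := by
    rw [← Finset.add_sum_erase _ _ hsmem, hsdeg]
    have herase : ∀ v ∈ (univ.filter (fun v : M.V => M.black v = true)).erase s,
        M.degree v = d := by
      intro v hv
      rw [Finset.mem_erase, Finset.mem_filter] at hv
      exact hblack v hv.1 hv.2.2
    rw [Finset.sum_congr rfl herase, Finset.sum_const, smul_eq_mul,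
      Finset.card_erase_of_mem hsmem]
    unfold Mobile.numBlack
    have hpos : 1 ≤ (univ.filter (fun v : M.V => M.black v = true)).card :=
      Finset.card_pos.2 ⟨s, hsmem⟩
    set c := (univ.filter (fun v : M.V => M.black v = true)).card with hc
    have hcc : (c - 1) * d + d = c * d := by
      have h' : c - 1 + 1 = c := by omega
      calc (c - 1) * d + d = ((c - 1) + 1) * d := by ring
        _ = c * d := by rw [h']
    omega
  have hdeg2 : ∑ v ∈ univ.filter (fun v : M.V => M.black v = true), M.degree v
      = M.numBuds + ∑ e : M.E, ((if M.black (M.ends e).1 = true then 1 else 0) +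
        (if M.black (M.ends e).2 = true then 1 else 0)) := by
    unfold Mobile.degree
    rw [Finset.sum_add_distrib]
    congr 1
    · unfold Mobile.numBuds
      apply Finset.sum_subset (Finset.subset_univ _)
      intro v _ hv
      rw [Finset.mem_filter] at hv
      apply M.budsOnlyBlack
      cases hb : M.black v with
      | false => rfl
      | true => exact absurd ⟨Finset.mem_univ v, hb⟩ hv
    · rw [Finset.sum_comm]
      apply Finset.sum_congr rfl
      intro e _
      rw [Finset.sum_add_distrib, Finset.sum_ite_eq, Finset.sum_ite_eq]
      simp [Finset.mem_filter]
  have hbe : (∑ e : M.E, ((if M.black (M.ends e).1 = true then 1 else 0) +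
      (if M.black (M.ends e).2 = true then 1 else 0))) + M.numWW = M.numEdges := by
    unfold Mobile.numWW Mobile.numEdges
    rw [Finset.card_filter, ← Finset.sum_add_distrib, ← Finset.card_univ,
      Finset.card_eq_sum_ones]
    apply Finset.sum_congr rfl
    intro e _
    have := hBB e
    cases hb1 : M.black (M.ends e).1 <;> cases hb2 : M.black (M.ends e).2 <;> simp_all
  have hnum : M.numBlack + M.numWhite = M.numEdges + 1 := by
    unfold Mobile.numBlack Mobile.numWhite Mobile.numEdges
    rw [← M.treeCard, ← Finset.card_univ]
    have hsplit := Finset.card_filter_add_card_filter_not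
      (s := (univ : Finset M.V)) (p := fun v => M.black v = true)
    have h2 : (univ.filter (fun v : M.V => ¬ M.black v = true))
        = univ.filter (fun v => M.black v = false) := by
      apply Finset.filter_congr
      intro v _
      simp
    rw [h2] at hsplit
    exact hsplit
  -- final arithmetic over ℤ
  have hpd : p + d ≤ p * d :=
    calc p + d ≤ p + p := by omega
      _ = p * 2 := by ring
      _ ≤ p * d := Nat.mul_le_mul (le_refl p) (by omega)
  have hq : ((p * d - p - d : ℕ) : ℤ) = (p : ℤ) * d - p - d := by
    rw [Nat.sub_sub, Nat.cast_sub hpd]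
    push_cast
    ring
  have hd2 : ((d - 2 : ℕ) : ℤ) = (d : ℤ) - 2 := by
    rw [Nat.cast_sub (by omega)]
    norm_num
  have N4 : ∑ v : M.V, M.vertexWeight v = M.numEdges * (d - 2) := hsum1.trans hsum2
  have N5 : ∑ v : M.V, M.vertexWeight v = (p * d - p - d) + x * d := by
    rw [hsplitAdj, hnotadj]
  unfold Mobile.excess
  have Z1 : ((∑ v ∈ univ.filter (fun v : M.V => M.black v = true), M.degree v : ℕ) : ℤ)
      + d = p + M.numBlack * d := by exact_mod_cast hdegsum
  have Z2 : ((∑ v ∈ univ.filter (fun v : M.V => M.black v = true), M.degree v : ℕ) : ℤ)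
      = M.numBuds + ((∑ e : M.E, ((if M.black (M.ends e).1 = true then 1 else 0) +
        (if M.black (M.ends e).2 = true then 1 else 0)) : ℕ) : ℤ) := by
    exact_mod_cast hdeg2
  have Z3 : ((∑ e : M.E, ((if M.black (M.ends e).1 = true then 1 else 0) +
      (if M.black (M.ends e).2 = true then 1 else 0)) : ℕ) : ℤ) + M.numWW
      = M.numEdges := by exact_mod_cast hbe
  have Z4 : ((∑ v : M.V, M.vertexWeight v : ℕ) : ℤ) = M.numEdges * ((d : ℤ) - 2) := by
    rw [← hd2]
    exact_mod_cast N4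
  have Z5 : ((∑ v : M.V, M.vertexWeight v : ℕ) : ℤ)
      = ((p : ℤ) * d - p - d) + x * d := by
    rw [← hq]
    exact_mod_cast N5
  have Z6 : (p : ℤ) + x = M.numWhite := by exact_mod_cast hcount
  have Z7 : (M.numBlack : ℤ) + M.numWhite = M.numEdges + 1 := by exact_mod_cast hnum
  linear_combination (-1 : ℤ) * Z1 + Z2 + Z3 + Z4 - Z5 - (d : ℤ) * Z6 - (d : ℤ) * Z7
end

section
/- Let u(x) be the unique formal power series with u = 1 + x·u^4. Then for p ≥ 3, the coefficients of T_p(x) = C(2p-4, p-3)·u^{2p-3} are given by [x^n] T_p(x) = (2n+p-2)·t_{p,n}, where t_{p,n} = (2(2p-3)!/((p-1)!(p-3)!)) · ((4n+2p-5)!/(n!(3n+2p-3)!)). -/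
open PowerSeries Nat

/-- `t_{p,n} = (2(2p-3)!/((p-1)!(p-3)!)) · ((4n+2p-5)!/(n!(3n+2p-3)!))`. -/
noncomputable def tpn (p n : ℕ) : ℚ :=
  (2 * (2 * p - 3)! : ℚ) / ((p - 1)! * (p - 3)! : ℚ) *
    ((4 * n + 2 * p - 5)! / ((n ! : ℚ) * ((3 * n + 2 * p - 3)! : ℚ)))

open Finset

/-- The coefficients of the solution, defined recursively. -/
noncomputable def aa : ℕ → ℚ
  | 0 => 1
  | (n+1) =>
    ∑ ij ∈ (antidiagonal n).attach,
      ∑ kl ∈ (antidiagonal ij.1.2).attach,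
        ∑ rs ∈ (antidiagonal kl.1.2).attach,
          aa ij.1.1 * (aa kl.1.1 * (aa rs.1.1 * aa rs.1.2))
  decreasing_by
  all_goals {
    first
    | (have h1 := Finset.HasAntidiagonal.mem_antidiagonal.mp ij.2; omega)
    | (have h1 := Finset.HasAntidiagonal.mem_antidiagonal.mp ij.2;
       have h2 := Finset.HasAntidiagonal.mem_antidiagonal.mp kl.2; omega)
    | (have h1 := Finset.HasAntidiagonal.mem_antidiagonal.mp ij.2;
       have h2 := Finset.HasAntidiagonal.mem_antidiagonal.mp kl.2;
       have h3 := Finset.HasAntidiagonal.mem_antidiagonal.mp rs.2; omega) }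

lemma coeff_pow_four (f : PowerSeries ℚ) (n : ℕ) :
    coeff n (f ^ 4) =
      ∑ ij ∈ antidiagonal n, ∑ kl ∈ antidiagonal ij.2, ∑ rs ∈ antidiagonal kl.2,
        coeff ij.1 f * (coeff kl.1 f * (coeff rs.1 f * coeff rs.2 f)) := by
  have h4 : f ^ 4 = f * (f * (f * f)) := by ring
  rw [h4, coeff_mul]
  refine Finset.sum_congr rfl fun ij _ => ?_
  rw [coeff_mul, Finset.mul_sum]
  refine Finset.sum_congr rfl fun kl _ => ?_
  rw [coeff_mul, Finset.mul_sum, Finset.mul_sum]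

lemma aa_succ (n : ℕ) :
    aa (n+1) = ∑ ij ∈ antidiagonal n, ∑ kl ∈ antidiagonal ij.2, ∑ rs ∈ antidiagonal kl.2,
        aa ij.1 * (aa kl.1 * (aa rs.1 * aa rs.2)) := by
  rw [aa]
  rw [Finset.sum_attach (antidiagonal n)
    (fun ij => ∑ kl ∈ (antidiagonal ij.2).attach,
        ∑ rs ∈ (antidiagonal kl.1.2).attach,
          aa ij.1 * (aa kl.1.1 * (aa rs.1.1 * aa rs.1.2)))]
  refine Finset.sum_congr rfl fun ij _ => ?_
  rw [Finset.sum_attach (antidiagonal ij.2)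
    (fun kl => ∑ rs ∈ (antidiagonal kl.2).attach,
          aa ij.1 * (aa kl.1 * (aa rs.1.1 * aa rs.1.2)))]
  refine Finset.sum_congr rfl fun kl _ => ?_
  rw [Finset.sum_attach (antidiagonal kl.2)
    (fun rs => aa ij.1 * (aa kl.1 * (aa rs.1 * aa rs.2)))]

/-- The solution power series. -/
noncomputable def UU : PowerSeries ℚ := PowerSeries.mk aa

lemma hUU : UU = 1 + PowerSeries.X * UU ^ 4 := by
  ext n
  cases n with
  | zero =>
    simp [UU, coeff_mk, aa, map_add, coeff_zero_eq_constantCoeff, map_mul, constantCoeff_X]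
  | succ n =>
    rw [map_add, coeff_succ_X_mul, coeff_one]
    simp only [Nat.succ_ne_zero, if_false, zero_add]
    rw [UU, coeff_mk, aa_succ, coeff_pow_four]
    refine Finset.sum_congr rfl fun ij _ => Finset.sum_congr rfl fun kl _ =>
      Finset.sum_congr rfl fun rs _ => ?_
    simp [coeff_mk]

lemma uniq (u v : PowerSeries ℚ) (hu : u = 1 + PowerSeries.X * u ^ 4)
    (hv : v = 1 + PowerSeries.X * v ^ 4) : u = v := by
  ext n
  induction n using Nat.strong_induction_on with
  | _ n ih =>
    cases n with
    | zero =>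
      rw [hu, hv]
      simp [map_add, coeff_zero_eq_constantCoeff, map_mul, constantCoeff_X]
    | succ n =>
      rw [hu, hv, map_add, map_add, coeff_succ_X_mul, coeff_succ_X_mul,
        coeff_pow_four, coeff_pow_four]
      refine congrArg _ ?_
      refine Finset.sum_congr rfl fun ij hij => Finset.sum_congr rfl fun kl hkl =>
        Finset.sum_congr rfl fun rs hrs => ?_
      have h1 := Finset.HasAntidiagonal.mem_antidiagonal.mp hij
      have h2 := Finset.HasAntidiagonal.mem_antidiagonal.mp hkl
      have h3 := Finset.HasAntidiagonal.mem_antidiagonal.mp hrs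
      rw [ih ij.1 (by omega), ih kl.1 (by omega), ih rs.1 (by omega), ih rs.2 (by omega)]

/-- Closed form for `[xⁿ] u^m`. -/
noncomputable def FF : ℕ → ℕ → ℚ
  | 0, _ => 1
  | (n+1), m => (Nat.choose (4*n+m+3) (n+1) : ℚ) - 3 * (Nat.choose (4*n+m+3) n : ℚ)

lemma FF_zero (n : ℕ) : FF (n+1) 0 = 0 := by
  have h := Nat.choose_succ_right_eq (4*n+3) n
  have h' : 4*n+3 - n = 3*(n+1) := by omega
  rw [h'] at h
  have hq : ((4*n+3).choose (n+1) : ℚ) * (n+1) = ((4*n+3).choose n : ℚ) * (3*(n+1)) := by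
    exact_mod_cast congrArg (Nat.cast : ℕ → ℚ) h
  have hne : ((n:ℚ)+1) ≠ 0 := by positivity
  simp only [FF]
  have : ((4*n+3).choose (n+1) : ℚ) = 3 * ((4*n+3).choose n : ℚ) := by
    field_simp at hq ⊢
    nlinarith [hq]
  rw [show 4*n+0+3 = 4*n+3 by ring, this]
  ring

lemma FF_rec (n m : ℕ) : FF (n+1) (m+1) = FF (n+1) m + FF n (m+4) := by
  cases n with
  | zero =>
    simp only [FF]
    rw [show 4*0+(m+1)+3 = m+4 by ring, show 4*0+m+3 = m+3 by ring]
    simp [Nat.choose_one_right, Nat.choose_zero_right]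
    --
    ring
  | succ j =>
    simp only [FF]
    rw [show 4*(j+1)+(m+1)+3 = (4*j+m+7)+1 by ring,
        show 4*(j+1)+m+3 = 4*j+m+7 by ring,
        show 4*j+(m+4)+3 = 4*j+m+7 by ring,
        show j+1+1 = (j+1)+1 by rfl,
        Nat.choose_succ_succ (4*j+m+7) (j+1),
        Nat.choose_succ_succ (4*j+m+7) j]
    push_cast
    ring

lemma coeff_u_pow (u : PowerSeries ℚ) (hu : u = 1 + PowerSeries.X * u ^ 4) :
    ∀ n m : ℕ, coeff n (u ^ m) = FF n m := by
  have hc : constantCoeff u = 1 := by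
    conv_lhs => rw [hu]
    simp [map_add, map_mul, constantCoeff_X]
  have hstep : ∀ m : ℕ, u ^ (m+1) = u ^ m + PowerSeries.X * u ^ (m+4) := by
    intro m
    calc u ^ (m+1) = u ^ m * (1 + PowerSeries.X * u ^ 4) := by rw [← hu]; ring
    _ = u ^ m + PowerSeries.X * u ^ (m+4) := by ring
  intro n
  induction n with
  | zero =>
    intro m
    rw [coeff_zero_eq_constantCoeff, map_pow, hc, one_pow]
    rfl
  | succ n ih =>
    intro m
    induction m with
    | zero => simpa using (FF_zero n).symm
    | succ m ihm =>
      rw [hstep m, map_add, coeff_succ_X_mul, ihm, ih (m+4), FF_rec]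

lemma fact_ne (k : ℕ) : ((k ! : ℕ) : ℚ) ≠ 0 := Nat.cast_ne_zero.2 (Nat.factorial_ne_zero k)

lemma final (q n : ℕ) :
    (Nat.choose (2*q+2) q : ℚ) * FF n (2*q+3) = ((2*n+q+1 : ℕ) : ℚ) * tpn (q+3) n := by
  have htpn : tpn (q+3) n =
      (2 * ((2*q+3)! : ℕ) : ℚ) / (((q+2)! : ℕ) * ((q)! : ℕ) : ℚ) *
        (((4*n+2*q+1)! : ℕ) / ((n ! : ℚ) * (((3*n+2*q+3)! : ℕ) : ℚ))) := by
    rw [tpn, show 2*(q+3)-3 = 2*q+3 by omega, show q+3-1 = q+2 by omega,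
      show q+3-3 = q by omega, show 4*n+2*(q+3)-5 = 4*n+2*q+1 by omega,
      show 3*n+2*(q+3)-3 = 3*n+2*q+3 by omega]
  rw [htpn]
  have hC : ((2*q+2).choose q : ℚ) = ((2*q+2)! : ℕ) / (((q)! : ℕ) * (((q+2)! : ℕ))) := by
    rw [Nat.cast_choose ℚ (show q ≤ 2*q+2 by omega), show 2*q+2-q = q+2 by omega]
  cases n with
  | zero =>
    have hFF : FF 0 (2*q+3) = 1 := rfl
    rw [hFF, hC]
    rw [show 4*0+2*q+1 = 2*q+1 by ring, show 3*0+2*q+3 = 2*q+3 by ring]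
    rw [show (2*q+3)! = (2*q+3) * (2*q+2)! from Nat.factorial_succ (2*q+2),
        show (2*q+2)! = (2*q+2) * (2*q+1)! from Nat.factorial_succ (2*q+1)]
    have h1 := fact_ne q
    have h2 := fact_ne (q+2)
    have h3 := fact_ne (2*q+1)
    simp only [Nat.mul_zero, Nat.zero_add, Nat.add_zero, Nat.factorial_zero]
    push_cast
    field_simp
  | succ j =>
    have hFF : FF (j+1) (2*q+3) =
        ((4*j+2*q+6).choose (j+1) : ℚ) - 3 * ((4*j+2*q+6).choose j : ℚ) := by
      simp only [FF]
      rw [show 4*j+(2*q+3)+3 = 4*j+2*q+6 by ring]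
    rw [hFF, hC,
      Nat.cast_choose ℚ (show j+1 ≤ 4*j+2*q+6 by omega),
      Nat.cast_choose ℚ (show j ≤ 4*j+2*q+6 by omega),
      show 4*j+2*q+6-(j+1) = 3*j+2*q+5 by omega,
      show 4*j+2*q+6-j = 3*j+2*q+6 by omega,
      show 4*(j+1)+2*q+1 = 4*j+2*q+5 by ring,
      show 3*(j+1)+2*q+3 = 3*j+2*q+6 by ring,
      show (4*j+2*q+6)! = (4*j+2*q+6) * (4*j+2*q+5)! from Nat.factorial_succ _,
      show (3*j+2*q+6)! = (3*j+2*q+6) * (3*j+2*q+5)! from Nat.factorial_succ _,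
      show (j+1)! = (j+1) * j ! from Nat.factorial_succ _,
      show (2*q+3)! = (2*q+3) * (2*q+2)! from Nat.factorial_succ _]
    have h1 := fact_ne q
    have h2 := fact_ne (q+2)
    have h3 := fact_ne j
    have h4 := fact_ne (3*j+2*q+5)
    have h5 := fact_ne (2*q+2)
    have h6 := fact_ne (4*j+2*q+5)
    push_cast
    have hj : ((j:ℚ)+1) ≠ 0 := by positivity
    have hx : ((3:ℚ)*j+2*q+6) ≠ 0 := by positivity
    field_simp
    ring

/-- There is a unique formal power series `u` with `u = 1 + x·u⁴`;
and for `p ≥ 3` the coefficients of `T_p(x) = C(2p-4, p-3)·u^{2p-3}` are given by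
`[xⁿ] T_p = (2n+p-2)·t_{p,n}`. -/
theorem stmt10 (p n : ℕ) (hp : 3 ≤ p) :
    (∃! u : PowerSeries ℚ, u = 1 + PowerSeries.X * u ^ 4) ∧
      ∀ u : PowerSeries ℚ, u = 1 + PowerSeries.X * u ^ 4 →
        PowerSeries.coeff (R := ℚ) n
            (((Nat.choose (2 * p - 4) (p - 3) : ℚ)) • u ^ (2 * p - 3)) =
          ((2 * n + p - 2 : ℕ) : ℚ) * tpn p n := by
  constructor
  · exact ⟨UU, hUU, fun v hv => uniq v UU hv hUU⟩
  · intro u hu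
    obtain ⟨q, rfl⟩ : ∃ q, p = q + 3 := ⟨p - 3, by omega⟩
    rw [map_smul, smul_eq_mul, coeff_u_pow u hu n (2 * (q+3) - 3),
      show 2*(q+3)-3 = 2*q+3 by omega, show 2*(q+3)-4 = 2*q+2 by omega,
      show (q+3)-3 = q by omega, show 2*n+(q+3)-2 = 2*n+q+1 by omega]
    exact final q n
end

section
/- For d ≥ 3, let b, w, e, e', β denote respectively the numbers of black vertices, white vertices, edges, white-white edges, and buds of a d-branching mobile. Then e - e' + β = d·b, (d-2)·e = d·w, and b + w = e + 1; consequently b = (2/d)·e + 1 and the excess e + e' - β equals -d. -/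
open Finset

/-- For `d ≥ 3`, let `b, w, e, e', β` be the numbers of black
vertices, white vertices, edges, white-white edges and buds of a `d`-branching mobile.
Then `e - e' + β = d·b`, `(d-2)·e = d·w`, `b + w = e + 1`; consequently `d·b = 2e + d`
(i.e. `b = (2/d)e + 1`) and the excess `e + e' - β` equals `-d`. -/
theorem stmt14 (M : Mobile) (d : ℕ) (hd : 3 ≤ d) (h : M.IsDBranching d) :
    ((M.numEdges : ℤ) - (M.numWW : ℤ) + (M.numBuds : ℤ) = (d : ℤ) * M.numBlack) ∧
    (((d : ℤ) - 2) * M.numEdges = (d : ℤ) * M.numWhite) ∧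
    ((M.numBlack : ℤ) + (M.numWhite : ℤ) = (M.numEdges : ℤ) + 1) ∧
    ((d : ℤ) * M.numBlack = 2 * (M.numEdges : ℤ) + d) ∧
    M.excess = -(d : ℤ) := by
  classical
  obtain ⟨hB, hW, hE⟩ := h
  have noBB : ∀ e : M.E, ¬ (M.black (M.ends e).1 = true ∧ M.black (M.ends e).2 = true) := by
    rintro e ⟨h1, h2⟩
    have z1 := (M.zeroBlack e).1 h1
    have z2 := (M.zeroBlack e).2 h2
    have := hE e
    simp only [Mobile.edgeWeight, z1, z2] at this
    omega
  set S := (univ.filter (fun e : M.E =>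
    ¬ (M.black (M.ends e).1 = false ∧ M.black (M.ends e).2 = false))).card with hS
  have hcard : M.numWW + S = M.numEdges := by
    simpa [Mobile.numWW, Mobile.numEdges, hS] using
      Finset.card_filter_add_card_filter_not (s := (univ : Finset M.E))
        (p := fun e : M.E => M.black (M.ends e).1 = false ∧ M.black (M.ends e).2 = false)
  -- Relation 1 (ℕ version): d * numBlack = numBuds + S
  have h1 : d * M.numBlack = M.numBuds + S := by
    have key : ∑ v ∈ univ.filter (fun v : M.V => M.black v = true), M.degree v
        = ∑ _v ∈ univ.filter (fun v : M.V => M.black v = true), d :=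
      Finset.sum_congr rfl (fun v hv => hB v (by simpa using hv))
    rw [Finset.sum_const, smul_eq_mul] at key
    have hdeg : ∑ v ∈ univ.filter (fun v : M.V => M.black v = true), M.degree v
        = M.numBuds + S := by
      simp only [Mobile.degree]
      rw [Finset.sum_add_distrib]
      congr 1
      · rw [Mobile.numBuds]
        refine Finset.sum_subset (Finset.filter_subset _ _) ?_
        intro v _ hv
        exact M.budsOnlyBlack v (by simpa using hv)
      · rw [Finset.sum_comm, hS, Finset.card_filter]
        refine Finset.sum_congr rfl (fun e _ => ?_)
        rw [Finset.sum_add_distrib, Finset.sum_ite_eq, Finset.sum_ite_eq]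
        simp only [Finset.mem_filter, Finset.mem_univ, true_and]
        have := noBB e
        cases hb1 : M.black (M.ends e).1 <;> cases hb2 : M.black (M.ends e).2 <;>
          simp_all
    rw [hdeg] at key
    rw [Mobile.numBlack, mul_comm]
    exact key.symm
  -- Relation 2 (ℕ version): d * numWhite = (d-2) * numEdges
  have h2 : d * M.numWhite = (d - 2) * M.numEdges := by
    have key : ∑ v ∈ univ.filter (fun v : M.V => M.black v = false), M.vertexWeight v
        = ∑ _v ∈ univ.filter (fun v : M.V => M.black v = false), d :=
      Finset.sum_congr rfl (fun v hv => hW v (by simpa using hv))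
    rw [Finset.sum_const, smul_eq_mul] at key
    have hww : ∑ v ∈ univ.filter (fun v : M.V => M.black v = false), M.vertexWeight v
        = (d - 2) * M.numEdges := by
      have hall : ∑ v ∈ univ.filter (fun v : M.V => M.black v = false), M.vertexWeight v
          = ∑ v : M.V, M.vertexWeight v := by
        refine Finset.sum_subset (Finset.filter_subset _ _) ?_
        intro v _ hv
        have hvb : M.black v = true := by simpa using hv
        refine Finset.sum_eq_zero (fun e _ => ?_)
        have z := M.zeroBlack e
        split_ifs with p q q <;> subst_vars <;> simp_all
      rw [hall]
      simp only [Mobile.vertexWeight]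
      rw [Finset.sum_comm]
      have hper : ∀ e : M.E, ∑ v : M.V, ((if (M.ends e).1 = v then (M.w e).1 else 0) +
          (if (M.ends e).2 = v then (M.w e).2 else 0)) = d - 2 := by
        intro e
        rw [Finset.sum_add_distrib, Finset.sum_ite_eq, Finset.sum_ite_eq]
        have := hE e
        simpa [Mobile.edgeWeight] using this
      rw [Finset.sum_congr rfl (fun e _ => hper e), Finset.sum_const, smul_eq_mul,
        Mobile.numEdges, Finset.card_univ, mul_comm]
    rw [hww] at key
    rw [Mobile.numWhite, mul_comm]
    exact key.symm
  -- Relation 3 (ℕ version): numBlack + numWhite = numEdges + 1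
  have h3 : M.numBlack + M.numWhite = M.numEdges + 1 := by
    have key := Finset.card_filter_add_card_filter_not (s := (univ : Finset M.V))
      (p := fun v : M.V => M.black v = true)
    have hfe : (univ.filter (fun v : M.V => ¬ M.black v = true))
        = univ.filter (fun v : M.V => M.black v = false) := by
      refine Finset.filter_congr (fun v _ => ?_)
      cases M.black v <;> simp
    rw [hfe, Finset.card_univ, M.treeCard] at key
    simpa [Mobile.numBlack, Mobile.numWhite, Mobile.numEdges] using key
  -- Conclude over ℤ
  have hd2 : ((d - 2 : ℕ) : ℤ) = (d : ℤ) - 2 := by omega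
  have z1 : (d : ℤ) * M.numBlack = M.numBuds + S := by exact_mod_cast h1
  have z2 : (d : ℤ) * M.numWhite = ((d : ℤ) - 2) * M.numEdges := by
    rw [← hd2]; exact_mod_cast h2
  have z3 : (M.numBlack : ℤ) + M.numWhite = M.numEdges + 1 := by exact_mod_cast h3
  have zc : (M.numWW : ℤ) + S = M.numEdges := by exact_mod_cast hcard
  have g4 : (d : ℤ) * M.numBlack = 2 * (M.numEdges : ℤ) + d := by
    linear_combination (d : ℤ) * z3 - z2
  refine ⟨by linarith, z2.symm, z3, g4, ?_⟩
  rw [Mobile.excess]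
  linarith
end

section
/- For a graph M with a nonnegative integer edge-weight function β, the ℕ-biorientations of M in which every edge e has total weight β(e) are in bijection with the locally minimal ordinary orientations of the graph M' obtained from M by replacing each edge e by β(e) parallel copies; under this bijection the ingoing weight of each vertex in M equals its indegree in M'. -/
open Finset

lemma card_lt_aux (n a : ℕ) (h : a ≤ n) :
    (univ.filter (fun i : Fin n => (i:ℕ) < a)).card = a := by
  have : (univ.filter (fun i : Fin n => (i:ℕ) < a)) =
      (Finset.range a).attachFin (fun m hm => lt_of_lt_of_le (Finset.mem_range.mp hm) h) := by
    ext i; simp [Finset.mem_attachFin]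
  rw [this, Finset.card_attachFin, Finset.card_range]

lemma card_decide_false (n a b : ℕ) (h : a + b = n) :
    (univ.filter (fun i : Fin n => decide (a ≤ (i:ℕ)) = false)).card = a := by
  have heq : (univ.filter (fun i : Fin n => decide (a ≤ (i:ℕ)) = false)) =
      (univ.filter (fun i : Fin n => (i:ℕ) < a)) := by
    apply Finset.filter_congr; intro i _; simp
  rw [heq, card_lt_aux n a (h ▸ Nat.le_add_right a b)]

lemma card_decide_true (n a b : ℕ) (h : a + b = n) :
    (univ.filter (fun i : Fin n => decide (a ≤ (i:ℕ)) = true)).card = b := by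
  have key := Finset.card_filter_add_card_filter_not
    (s := (univ : Finset (Fin n))) (p := fun i : Fin n => decide (a ≤ (i:ℕ)) = true)
  have hneg : (univ.filter (fun i : Fin n => ¬ (decide (a ≤ (i:ℕ)) = true))) =
      (univ.filter (fun i : Fin n => decide (a ≤ (i:ℕ)) = false)) := by
    apply Finset.filter_congr; intro i _; simp
  rw [hneg, card_decide_false n a b h, Finset.card_univ, Fintype.card_fin] at key
  omega

lemma mono_eq_decide {n : ℕ} (o : Fin n → Bool) (ho : Monotone o) (i : Fin n) :
    o i = decide ((univ.filter (fun j : Fin n => o j = false)).card ≤ (i:ℕ)) := by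
  set k := (univ.filter (fun j : Fin n => o j = false)).card with hk
  cases hoi : o i with
  | false =>
    have hsub : (univ.filter (fun j : Fin n => (j:ℕ) ≤ (i:ℕ))) ⊆
        univ.filter (fun j : Fin n => o j = false) := by
      intro j hj
      simp only [mem_filter, mem_univ, true_and] at hj ⊢
      have hle : o j ≤ o i := ho (Fin.le_def.mpr hj)
      rw [hoi] at hle
      exact le_antisymm hle (Bool.false_le _)
    have hc : (univ.filter (fun j : Fin n => (j:ℕ) ≤ (i:ℕ))).card = (i:ℕ) + 1 := by
      have h1 : (univ.filter (fun j : Fin n => (j:ℕ) < (i:ℕ) + 1)).card = (i:ℕ) + 1 :=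
        card_lt_aux n ((i:ℕ) + 1) i.isLt
      rw [← h1]; apply congrArg; apply Finset.filter_congr; intro j _
      simp [Nat.lt_succ_iff]
    have : (i:ℕ) + 1 ≤ k := by
      rw [hk, ← hc]; exact Finset.card_le_card hsub
    symm; exact decide_eq_false (by omega)
  | true =>
    have hsub : (univ.filter (fun j : Fin n => o j = false)) ⊆
        (univ.filter (fun j : Fin n => (j:ℕ) < (i:ℕ))) := by
      intro j hj
      simp only [mem_filter, mem_univ, true_and] at hj ⊢
      by_contra hcon
      have : i ≤ j := Fin.le_def.mpr (Nat.le_of_not_lt hcon)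
      have hle : o i ≤ o j := ho this
      rw [hoi, hj] at hle
      exact absurd hle (by simp)
    have : k ≤ (i:ℕ) := by
      rw [hk]
      calc (univ.filter (fun j : Fin n => o j = false)).card
          ≤ (univ.filter (fun j : Fin n => (j:ℕ) < (i:ℕ))).card := Finset.card_le_card hsub
        _ = (i:ℕ) := card_lt_aux n (i:ℕ) (le_of_lt i.isLt)
    symm; exact decide_eq_true this

/-- For a graph with edge-endpoints `ends : E → V × V` and a
nonnegative integer edge-weight function `β`, the ℕ-biorientations in which every edge
`e` has total weight `β e` are in bijection with the locally minimal ordinary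
orientations of the graph `M'` obtained by replacing each edge `e` by `β e` parallel
copies.  Here an orientation of `M'` assigns to each copy `i : Fin (β e)` a direction
(`true` = directed towards the second endpoint of `e`); the copies of an edge are
arranged in planar order, and local minimality (no counterclockwise circuit among the
copies of a single edge) amounts to monotonicity of the direction function on each
bunch.  Under the bijection, the ingoing weight of each vertex of `M` equals its
indegree in `M'`. -/
theorem stmt15 (V E : Type) [Fintype V] [Fintype E] [DecidableEq V]
    (ends : E → V × V) (β : E → ℕ) :
    ∃ Φ : {w : E → ℕ × ℕ // ∀ e, (w e).1 + (w e).2 = β e} ≃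
        {o : (e : E) → Fin (β e) → Bool // ∀ e, Monotone (o e)},
      ∀ (w : {w : E → ℕ × ℕ // ∀ e, (w e).1 + (w e).2 = β e}) (v : V),
        (∑ e : E, ((if (ends e).1 = v then (w.1 e).1 else 0) +
            (if (ends e).2 = v then (w.1 e).2 else 0))) =
          ∑ e : E, ((if (ends e).1 = v then
              (univ.filter (fun i : Fin (β e) => (Φ w).1 e i = false)).card else 0) +
            (if (ends e).2 = v then
              (univ.filter (fun i : Fin (β e) => (Φ w).1 e i = true)).card else 0)) := by
  refine ⟨⟨
    fun w => ⟨fun e i => decide ((w.1 e).1 ≤ (i:ℕ)), fun e i j hij => ?_⟩,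
    fun o => ⟨fun e => ((univ.filter (fun i : Fin (β e) => o.1 e i = false)).card,
        (univ.filter (fun i : Fin (β e) => o.1 e i = true)).card), fun e => ?_⟩,
    fun w => ?_, fun o => ?_⟩, ?_⟩
  · -- monotonicity of the threshold function
    by_cases hai : (w.1 e).1 ≤ (i:ℕ)
    · have : (w.1 e).1 ≤ (j:ℕ) := hai.trans hij
      simp [hai, this]
    · simp [hai, Bool.false_le]
  · -- total weight is β e
    have key := Finset.card_filter_add_card_filter_not
      (s := (univ : Finset (Fin (β e)))) (p := fun i : Fin (β e) => o.1 e i = false)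
    have hneg : (univ.filter (fun i : Fin (β e) => ¬ (o.1 e i = false))) =
        (univ.filter (fun i : Fin (β e) => o.1 e i = true)) := by
      apply Finset.filter_congr; intro i _; simp
    rw [hneg, Finset.card_univ, Fintype.card_fin] at key
    exact key
  · -- left inverse
    apply Subtype.ext; funext e
    refine Prod.ext ?_ ?_
    · exact card_decide_false (β e) (w.1 e).1 (w.1 e).2 (w.2 e)
    · exact card_decide_true (β e) (w.1 e).1 (w.1 e).2 (w.2 e)
  · -- right inverse
    apply Subtype.ext; funext e i
    exact (mono_eq_decide (o.1 e) (o.2 e) i).symm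
  · -- degree statement
    intro w v
    apply Finset.sum_congr rfl
    intro e _
    have hf : (univ.filter (fun i : Fin (β e) =>
        decide ((w.1 e).1 ≤ (i:ℕ)) = false)).card = (w.1 e).1 :=
      card_decide_false (β e) (w.1 e).1 (w.1 e).2 (w.2 e)
    have ht : (univ.filter (fun i : Fin (β e) =>
        decide ((w.1 e).1 ≤ (i:ℕ)) = true)).card = (w.1 e).2 :=
      card_decide_true (β e) (w.1 e).1 (w.1 e).2 (w.2 e)
    simp only [Equiv.coe_fn_mk, hf, ht]
end

section
/- If d = 2b is even, then the formal power series W_i determined by the system W_{d-2} = x(1+W_0)^{d-1}, W_i = h_{i+2}(W_1,...,W_{d-2}) for 0 ≤ i ≤ d-3, satisfy W_i = 0 for all odd indices i; moreover the series V_i := W_{2i} satisfy V_{b-1} = x(1+V_0)^{2b-1} and V_i = h_{i+1}(V_1,...,V_{b-1}) for 0 ≤ i ≤ b-2. -/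
open Finset PowerSeries

/-- `hcomp j W` is the generating polynomial `h_j(W_1, W_2, …)` of integer compositions
of `j` with at least one part, where a part of size `i` is marked by `W i`:
`h_j = ∑_{r>0} ∑_{i_1+⋯+i_r=j, i_k>0} W_{i_1}⋯W_{i_r}`. -/
noncomputable def hcomp (j : ℕ) (W : ℕ → PowerSeries ℚ) : PowerSeries ℚ :=
  ∑ c ∈ univ.filter (fun c : Composition j => c.length ≠ 0), (c.blocks.map W).prod

/-- The system of equations `W_{d-2} = x(1+W_0)^{d-1}`,
`W_i = h_{i+2}(W_1,…,W_{d-2})` for `0 ≤ i ≤ d-3`, and `W_i = 0` for `i > d-2`. -/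
def IsSystemSol (d : ℕ) (W : ℕ → PowerSeries ℚ) : Prop :=
  W (d - 2) = PowerSeries.X * (1 + W 0) ^ (d - 1) ∧
  (∀ i : ℕ, i + 3 ≤ d → W i = hcomp (i + 2) W) ∧
  (∀ i : ℕ, d - 2 < i → W i = 0)



private lemma sum_map_two_mul (l : List ℕ) : (l.map (2 * ·)).sum = 2 * l.sum := by
  induction l with
  | nil => simp
  | cons a t ih => simp [ih, Nat.mul_add]

private lemma exists_odd_mem (l : List ℕ) (h : Odd l.sum) : ∃ b ∈ l, Odd b := by
  induction l with
  | nil => simp at h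
  | cons a t ih =>
    rcases Nat.even_or_odd a with ha | ha
    · have : Odd t.sum := by
        rw [List.sum_cons] at h
        rcases ha with ⟨k, hk⟩; rcases h with ⟨m, hm⟩
        exact ⟨m - k, by omega⟩
      obtain ⟨b, hb, hob⟩ := ih this
      exact ⟨b, List.mem_cons_of_mem _ hb, hob⟩
    · exact ⟨a, List.mem_cons_self, ha⟩

private lemma constCoeff_list_prod_zero (l : List (PowerSeries ℚ)) (f : PowerSeries ℚ)
    (hf : f ∈ l) (h : constantCoeff f = 0) : constantCoeff l.prod = 0 := by
  classical
  rw [← List.prod_erase hf, map_mul, h, zero_mul]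

private lemma coeff_list_prod_zero (n : ℕ) (l : List (PowerSeries ℚ)) (f : PowerSeries ℚ)
    (hf : f ∈ l) (hl : 2 ≤ l.length)
    (hall : ∀ g ∈ l, constantCoeff g = 0)
    (hcf : ∀ m < n, coeff m f = 0) : coeff n l.prod = 0 := by
  classical
  rw [← List.prod_erase hf, PowerSeries.coeff_mul]
  apply Finset.sum_eq_zero
  rintro ⟨p, q⟩ hpq
  replace hpq : p + q = n := by simpa using hpq
  rcases lt_or_eq_of_le (Nat.le_of_lt_succ (Nat.lt_succ_of_le (Nat.le.intro hpq))) with hp | hp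
  · rw [hcf p hp, zero_mul]
  · have hq : q = 0 := by omega
    have hlen : (l.erase f).length = l.length - 1 := List.length_erase_of_mem hf
    have : ∃ g, g ∈ l.erase f := by
      rcases List.exists_mem_of_length_pos (l := l.erase f) (by omega) with ⟨g, hg⟩
      exact ⟨g, hg⟩
    obtain ⟨g, hg⟩ := this
    have : constantCoeff (l.erase f).prod = 0 :=
      constCoeff_list_prod_zero _ g hg (hall g (List.mem_of_mem_erase hg))
    rw [hq, PowerSeries.coeff_zero_eq_constantCoeff, this, mul_zero]

private lemma odd_vanish (d b : ℕ) (hd : 3 ≤ d) (hb : d = 2 * b)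
    (W : ℕ → PowerSeries ℚ) (hW : IsSystemSol d W)
    (hW0 : ∀ i, PowerSeries.constantCoeff (W i) = 0) :
    ∀ i : ℕ, Odd i → W i = 0 := by
  have main : ∀ n : ℕ, ∀ i : ℕ, Odd i → coeff n (W i) = 0 := by
    intro n
    induction n using Nat.strong_induction_on with
    | _ n ihn =>
      suffices h : ∀ j i, d ≤ i + j → Odd i → coeff n (W i) = 0 by
        intro i hi; exact h d i (Nat.le_add_left d i) hi
      intro j
      induction j with
      | zero =>
        intro i hdi hi
        rw [hW.2.2 i (by omega), map_zero]
      | succ j ihj =>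
        intro i hdi hi
        by_cases hcase : i + 3 ≤ d
        · rw [hW.2.1 i hcase, hcomp, map_sum]
          apply Finset.sum_eq_zero
          intro c hc
          have hsum : c.blocks.sum = i + 2 := c.blocks_sum
          by_cases hlen : c.blocks.length = 1
          · obtain ⟨a, ha⟩ := List.length_eq_one_iff.mp hlen
            have : a = i + 2 := by rw [ha] at hsum; simpa using hsum
            subst this
            rw [ha]
            simp only [List.map_cons, List.map_nil, List.prod_cons, List.prod_nil, mul_one]
            exact ihj (i + 2) (by omega) (by rcases hi with ⟨k, hk⟩; exact ⟨k + 1, by omega⟩)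
          · have hlen2 : 2 ≤ c.blocks.length := by
              rcases Finset.mem_filter.mp hc with ⟨-, hne⟩
              have : c.blocks.length ≠ 0 := hne
              omega
            obtain ⟨bk, hbk, hobk⟩ := exists_odd_mem c.blocks (by
              rw [hsum]; rcases hi with ⟨k, hk⟩; exact ⟨k + 1, by omega⟩)
            apply coeff_list_prod_zero n _ (W bk) (List.mem_map_of_mem (f := W) hbk)
              (by simpa using hlen2)
            · rintro g hg
              obtain ⟨a, -, rfl⟩ := List.mem_map.mp hg
              exact hW0 a
            · intro m hm
              exact ihn m hm bk hobk
        · rw [hW.2.2 i (by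
            rw [Nat.odd_iff] at hi
            omega), map_zero]
  intro i hi
  ext n
  rw [main n i hi, map_zero]


private lemma map_half_double (l : List ℕ) (h : ∀ x ∈ l, Even x) :
    (l.map (· / 2)).map (2 * ·) = l := by
  rw [List.map_map]
  conv_rhs => rw [← List.map_id l]
  apply List.map_congr_left
  intro x hx
  obtain ⟨k, hk⟩ := h x hx
  simp only [Function.comp_apply, id_eq]
  omega

private def compDouble (m : ℕ) (c : Composition m) : Composition (2 * m) :=
  ⟨c.blocks.map (2 * ·),
   fun {i} hi => by
     obtain ⟨a, ha, rfl⟩ := List.mem_map.mp hi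
     have := c.blocks_pos ha; omega,
   by rw [sum_map_two_mul, c.blocks_sum]⟩

private def compHalve (m : ℕ) (c : Composition (2 * m)) (h : ∀ x ∈ c.blocks, Even x) :
    Composition m :=
  ⟨c.blocks.map (· / 2),
   fun {i} hi => by
     obtain ⟨a, ha, rfl⟩ := List.mem_map.mp hi
     have h1 := c.blocks_pos ha
     obtain ⟨k, hk⟩ := h a ha
     omega,
   by
     have h2 : 2 * (c.blocks.map (· / 2)).sum = 2 * m := by
       rw [← sum_map_two_mul, map_half_double _ h, c.blocks_sum]
     omega⟩

private lemma hcomp_double (W : ℕ → PowerSeries ℚ) (hodd : ∀ i, Odd i → W i = 0) (m : ℕ) :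
    hcomp (2 * m) W = hcomp m (fun k => W (2 * k)) := by
  classical
  rw [hcomp, hcomp]
  rw [← Finset.sum_filter_of_ne (p := fun c : Composition (2 * m) => ∀ x ∈ c.blocks, Even x)
    (fun c _ hne => by
      by_contra hodd'
      obtain ⟨x, hx'⟩ := not_forall.mp hodd'
      obtain ⟨hx, hex⟩ := Classical.not_imp.mp hx'
      apply hne
      apply List.prod_eq_zero
      rw [← hodd x (Nat.odd_iff.mpr (by have := Nat.even_iff.not.mp hex; omega))]
      exact List.mem_map_of_mem (f := W) hx)]
  refine (Finset.sum_bij'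
    (fun (c : Composition m) (_ : c ∈ univ.filter fun c : Composition m => c.length ≠ 0) =>
      compDouble m c)
    (fun c hc => compHalve m c (Finset.mem_filter.mp hc).2)
    ?_ ?_ ?_ ?_ ?_).symm
  · intro c hc
    rw [Finset.mem_filter] at hc ⊢
    refine ⟨Finset.mem_filter.mpr ⟨Finset.mem_univ _, ?_⟩, ?_⟩
    · show (c.blocks.map (2 * ·)).length ≠ 0
      simpa [Composition.length] using hc.2
    · intro x hx
      obtain ⟨a, -, rfl⟩ := List.mem_map.mp hx
      exact ⟨a, two_mul a⟩
  · intro c hc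
    rw [Finset.mem_filter] at hc ⊢
    refine ⟨Finset.mem_univ _, ?_⟩
    show (c.blocks.map (· / 2)).length ≠ 0
    have := (Finset.mem_filter.mp hc.1).2
    simpa [Composition.length] using this
  · intro c hc
    apply Composition.ext
    show ((c.blocks.map (2 * ·)).map (· / 2)) = c.blocks
    rw [List.map_map]
    conv_rhs => rw [← List.map_id c.blocks]
    apply List.map_congr_left
    intro x hx
    simp only [Function.comp_apply, id_eq]
    omega
  · intro c hc
    apply Composition.ext
    exact map_half_double c.blocks (Finset.mem_filter.mp hc).2
  · intro c hc
    show (c.blocks.map (fun k => W (2 * k))).prod = ((c.blocks.map (2 * ·)).map W).prod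
    rw [List.map_map]
    rfl

/-- If `d = 2b` is even, then the power series `W_i` solving the
system (with zero constant terms) satisfy `W_i = 0` for all odd `i`; moreover the
series `V_i := W_{2i}` satisfy `V_{b-1} = x(1+V_0)^{2b-1}` and
`V_i = h_{i+1}(V_1,…,V_{b-1})` for `0 ≤ i ≤ b-2`. -/
theorem stmt17 (d b : ℕ) (hd : 3 ≤ d) (hb : d = 2 * b)
    (W : ℕ → PowerSeries ℚ) (hW : IsSystemSol d W)
    (hW0 : ∀ i, PowerSeries.constantCoeff (W i) = 0) :
    (∀ i : ℕ, Odd i → W i = 0) ∧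
      (W (2 * (b - 1)) = PowerSeries.X * (1 + W 0) ^ (2 * b - 1)) ∧
      (∀ i : ℕ, i + 2 ≤ b → W (2 * i) = hcomp (i + 1) (fun k => W (2 * k))) := by
  have hodd := odd_vanish d b hd hb W hW hW0
  refine ⟨hodd, ?_, ?_⟩
  · have e1 : 2 * (b - 1) = d - 2 := by omega
    have e2 : 2 * b - 1 = d - 1 := by omega
    rw [e1, e2]
    exact hW.1
  · intro i hi
    rw [hW.2.1 (2 * i) (by omega)]
    have e : 2 * i + 2 = 2 * (i + 1) := by ring
    rw [e, hcomp_double W hodd (i + 1)]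
end
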